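/- Let G be a 3-connected graph and let A, B be the two sides of a non-atomic 3-edge-cut of G (so E(A,B) consists of exactly 3 edges, A∩B = ∅, and |A|,|B| ≥ 2). Then (A,B) is a totally-nested nontrivial tri-separation of G: it is a tri-separation, both G[A] and G[B] contain a cycle, and (A,B) is nested with every tri-separation of G. -/

import Mathlib

namespace Paper

open SimpleGraph

variable {V : Type*} [Fintype V] [DecidableEq V]

/-- A graph is `k`-connected if it has more than `k` vertices and deleting
fewer than `k` vertices never disconnects it. -/
def KConnected {W : Type*} (k : ℕ) (H : SimpleGraph W) : Prop :=
  k < Nat.card W ∧ ∀ S : Set W, S.ncard < k → (H.induce Sᶜ).Connected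

/-- A mixed-separation of `G`: `A ∪ B = V(G)` and both `A \ B` and `B \ A` are nonempty. -/
def MixedSep (G : SimpleGraph V) (A B : Set V) : Prop :=
  A ∪ B = Set.univ ∧ (A \ B).Nonempty ∧ (B \ A).Nonempty

/-- The edges of the separator of `(A,B)`: the edges between `A \ B` and `B \ A`. -/
def sepEdges (G : SimpleGraph V) (A B : Set V) : Set (Sym2 V) :=
  {e | e ∈ G.edgeSet ∧ ∃ x ∈ A \ B, ∃ y ∈ B \ A, e = s(x, y)}

/-- The separator of `(A,B)`: the vertices of `A ∩ B` together with the
edges between `A \ B` and `B \ A`, viewed as a set in `V ⊕ Sym2 V`. -/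
def sepSet (G : SimpleGraph V) (A B : Set V) : Set (V ⊕ Sym2 V) :=
  (Sum.inl '' (A ∩ B)) ∪ (Sum.inr '' sepEdges G A B)

/-- The order of a mixed-separation: the size of its separator. -/
noncomputable def sepOrder (G : SimpleGraph V) (A B : Set V) : ℕ :=
  (sepSet G A B).ncard

/-- A mixed `k`-separation. -/
def MixedKSep (G : SimpleGraph V) (k : ℕ) (A B : Set V) : Prop :=
  MixedSep G A B ∧ sepOrder G A B = k

/-- A tri-separation: a mixed 3-separation such that every vertex of `A ∩ B`
has at least two neighbours in both `G[A]` and `G[B]`. -/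
def TriSep (G : SimpleGraph V) (A B : Set V) : Prop :=
  MixedKSep G 3 A B ∧
    ∀ v ∈ A ∩ B, 2 ≤ (G.neighborSet v ∩ A).ncard ∧ 2 ≤ (G.neighborSet v ∩ B).ncard

/-- Two mixed-separations are nested if, after possibly swapping the names of
the sides of either one, `A ⊆ C` and `B ⊇ D`. -/
def Nested (A B C D : Set V) : Prop :=
  (A ⊆ C ∧ D ⊆ B) ∨ (A ⊆ D ∧ C ⊆ B) ∨ (B ⊆ C ∧ D ⊆ A) ∨ (B ⊆ D ∧ C ⊆ A)

/-- The induced subgraph `G[A]` contains a cycle. -/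
def HasCycleIn (G : SimpleGraph V) (A : Set V) : Prop :=
  ∃ (u : V) (p : G.Walk u u), p.IsCycle ∧ ∀ x ∈ p.support, x ∈ A

/-- A mixed 3-separation is nontrivial if both sides induce a subgraph containing a cycle. -/
def NontrivialSep (G : SimpleGraph V) (A B : Set V) : Prop :=
  HasCycleIn G A ∧ HasCycleIn G B

/-- A mixed-separation is strong if every vertex in its separator has degree at least 4. -/
def StrongSep (G : SimpleGraph V) (A B : Set V) : Prop :=
  ∀ v ∈ A ∩ B, 4 ≤ (G.neighborSet v).ncard

/-- A tri-separation is totally nested if it is nested with every tri-separation of `G`. -/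
def TotallyNested (G : SimpleGraph V) (A B : Set V) : Prop :=
  ∀ C D : Set V, TriSep G C D → Nested A B C D

/-- A trivial tri-separation: its sides are the sides `{v}` and `V \ {v}` of an
atomic cut at a degree-3 vertex `v`. -/
def TrivialSep (G : SimpleGraph V) (A B : Set V) : Prop :=
  ∃ v : V, (G.neighborSet v).ncard = 3 ∧
    ((A = {v} ∧ B = {v}ᶜ) ∨ (B = {v} ∧ A = {v}ᶜ))

/-- Diagonal edges of the crossing-diagram of `(A,B)` and `(C,D)`:
edges whose endvertices lie in opposite corners. -/
def diagEdges (G : SimpleGraph V) (A B C D : Set V) : Set (Sym2 V) :=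
  {e | e ∈ G.edgeSet ∧ ∃ x y, e = s(x, y) ∧
    ((x ∈ (A \ B) ∩ (C \ D) ∧ y ∈ (B \ A) ∩ (D \ C)) ∨
     (x ∈ (A \ B) ∩ (D \ C) ∧ y ∈ (B \ A) ∩ (C \ D)))}

/-- The centre of the crossing-diagram: `A ∩ B ∩ C ∩ D` together with the diagonal edges. -/
def centre (G : SimpleGraph V) (A B C D : Set V) : Set (V ⊕ Sym2 V) :=
  (Sum.inl '' (A ∩ B ∩ C ∩ D)) ∪ (Sum.inr '' diagEdges G A B C D)

/-- The link for the side `C` in the crossing-diagram of `(A,B)` and `(C,D)`: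
the vertices `(A ∩ B) \ D` together with the non-diagonal edges of the separator
of `(A,B)` having an endvertex in a corner for `C`. -/
def link (G : SimpleGraph V) (A B C D : Set V) : Set (V ⊕ Sym2 V) :=
  (Sum.inl '' ((A ∩ B) \ D)) ∪
    (Sum.inr '' {e | e ∈ sepEdges G A B ∧ e ∉ diagEdges G A B C D ∧ ∃ x ∈ e, x ∈ C \ D})

/-- The corner-separator at the corner for `{A,C}`: the union of the links for `A`
and for `C` together with the centre, minus the diagonal edges without an
endvertex in the corner for `{A,C}`. -/
def cornerSep (G : SimpleGraph V) (A B C D : Set V) : Set (V ⊕ Sym2 V) :=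
  link G C D A B ∪ link G A B C D ∪ (Sum.inl '' (A ∩ B ∩ C ∩ D)) ∪
    (Sum.inr '' {e | e ∈ diagEdges G A B C D ∧ ∃ x ∈ e, x ∈ (A \ B) ∩ (C \ D)})

/-- Jumping edges: edges joining vertices of two opposite links. -/
def jumpEdges (G : SimpleGraph V) (A B C D : Set V) : Set (Sym2 V) :=
  {e | e ∈ G.edgeSet ∧ ∃ x y, e = s(x, y) ∧
    ((x ∈ (A ∩ B) \ D ∧ y ∈ (A ∩ B) \ C) ∨ (x ∈ (C ∩ D) \ B ∧ y ∈ (C ∩ D) \ A))}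

/-- A 2-separation: a separation of order two with no edges in its separator. -/
def TwoSep (G : SimpleGraph V) (A B : Set V) : Prop :=
  A ∪ B = Set.univ ∧ (A \ B).Nonempty ∧ (B \ A).Nonempty ∧
    (A ∩ B).ncard = 2 ∧ sepEdges G A B = ∅

/-- `K` is (the vertex set of) a connected component of `G - S`. -/
def IsCompOf (G : SimpleGraph V) (S K : Set V) : Prop :=
  ∃ c : (G.induce Sᶜ).ConnectedComponent, K = Subtype.val '' c.supp

set_option linter.unusedSectionVars false
set_option linter.unusedVariables false
set_option linter.unusedTactic false
set_option maxHeartbeats 1000000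

/-- external neighbourhood -/
def NS (G : SimpleGraph V) (U : Set V) : Set V := {v | v ∉ U ∧ ∃ u ∈ U, G.Adj u v}

lemma mem_NS {G : SimpleGraph V} {U : Set V} {v : V} :
    v ∈ NS G U ↔ v ∉ U ∧ ∃ u ∈ U, G.Adj u v := Iff.rfl

lemma T1D (G : SimpleGraph V) (hK : KConnected 3 G) (U : Set V) (hU : U.Nonempty) :
    3 ≤ (NS G U).ncard ∨ U ∪ NS G U = Set.univ := by
  by_contra h
  push_neg at h
  obtain ⟨h3, hcov⟩ := h
  have hex : ∃ w, w ∉ U ∪ NS G U := by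
    by_contra hw; push_neg at hw
    exact hcov (Set.eq_univ_of_forall (fun v => hw v))
  obtain ⟨w, hw⟩ := hex
  have hconn := hK.2 (NS G U) (by omega)
  obtain ⟨u, hu⟩ := hU
  have huc : u ∈ (NS G U)ᶜ := fun hc => hc.1 hu
  have hwc : w ∈ (NS G U)ᶜ := fun hc => hw (Or.inr hc)
  have hreach := hconn.preconnected ⟨u, huc⟩ ⟨w, hwc⟩
  obtain ⟨p⟩ := hreach
  -- walk stays in U
  have key : ∀ (a b : ↥((NS G U)ᶜ)) (q : (G.induce ((NS G U)ᶜ)).Walk a b),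
      a.1 ∈ U → b.1 ∈ U := by
    intro a b q
    induction q with
    | nil => exact id
    | cons hadj q ih =>
      intro ha
      rename_i a' c' _
      apply ih
      have hGadj : G.Adj a'.1 c'.1 := hadj
      by_contra hc
      exact c'.2 ⟨hc, a'.1, ha, hGadj⟩
  have := key _ _ p hu
  exact hw (Or.inl this)


lemma sepEdges_comm (G : SimpleGraph V) (A B : Set V) :
    sepEdges G A B = sepEdges G B A := by
  ext e
  constructor <;>
  · rintro ⟨he, x, hx, y, hy, rfl⟩
    exact ⟨he, y, hy, x, hx, Sym2.eq_swap⟩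

lemma mem_sepEdges_of {G : SimpleGraph V} {A B : Set V} {x y : V}
    (hx : x ∈ A) (hx' : x ∉ B) (hy : y ∈ B) (hy' : y ∉ A) (h : G.Adj x y) :
    s(x, y) ∈ sepEdges G A B :=
  ⟨h, x, ⟨hx, hx'⟩, y, ⟨hy, hy'⟩, rfl⟩

/-- Master counting lemma: two disjoint parts of `A`, with witness sets of
`B`-vertices adjacent to them, give distinct `A`–`B` edges. -/
lemma ML2 (G : SimpleGraph V) {A B P1 P2 W1 W2 : Set V} (hdisj : A ∩ B = ∅)
    (hP1 : P1 ⊆ A) (hP2 : P2 ⊆ A) (hP12 : P1 ∩ P2 = ∅)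
    (hW1 : W1 ⊆ B ∩ NS G P1) (hW2 : W2 ⊆ B ∩ NS G P2) :
    W1.ncard + W2.ncard ≤ (sepEdges G A B).ncard := by
  classical
  have hAB : ∀ v, v ∈ A → v ∈ B → False := by
    intro v h1 h2; have : v ∈ A ∩ B := ⟨h1, h2⟩; rw [hdisj] at this; exact this
  -- edge sets
  set E1 : Set (Sym2 V) := {e | e ∈ sepEdges G A B ∧ ∃ a ∈ P1, a ∈ e} with hE1
  set E2 : Set (Sym2 V) := {e | e ∈ sepEdges G A B ∧ ∃ a ∈ P2, a ∈ e} with hE2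
  have key : ∀ (P W : Set V), P ⊆ A → W ⊆ B ∩ NS G P →
      W.ncard ≤ {e | e ∈ sepEdges G A B ∧ ∃ a ∈ P, a ∈ e}.ncard := by
    intro P W hPA hW
    set f : V → V := fun w => if h : ∃ a ∈ P, G.Adj a w then h.choose else w with hf
    have hfP : ∀ w ∈ W, f w ∈ P ∧ G.Adj (f w) w := by
      intro w hw
      obtain ⟨-, -, a, ha, hadj⟩ := hW hw
      have hex : ∃ a ∈ P, G.Adj a w := ⟨a, ha, hadj⟩
      simp only [hf, dif_pos hex]
      exact ⟨hex.choose_spec.1, hex.choose_spec.2⟩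
    apply Set.ncard_le_ncard_of_injOn (fun w => s(f w, w))
    · intro w hw
      obtain ⟨hfw, hadj⟩ := hfP w hw
      have hwB : w ∈ B := (hW hw).1
      refine ⟨mem_sepEdges_of (hPA hfw) (fun hc => hAB _ (hPA hfw) hc) hwB
        (fun hc => hAB _ hc hwB) hadj, f w, hfw, ?_⟩
      simp [Sym2.mem_iff]
    · intro w hw w' hw' heq
      rw [Sym2.eq_iff] at heq
      rcases heq with ⟨h1, h2⟩ | ⟨h1, h2⟩
      · exact h2
      · exfalso
        have hwA : w ∈ A := by rw [h2]; exact hPA (hfP w' hw').1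
        exact hAB w hwA (hW hw).1
  have h1 : W1.ncard ≤ E1.ncard := by rw [hE1]; exact key P1 W1 hP1 hW1
  have h2 : W2.ncard ≤ E2.ncard := by rw [hE2]; exact key P2 W2 hP2 hW2
  have hdisjE : Disjoint E1 E2 := by
    rw [Set.disjoint_left]
    rintro e ⟨⟨he, x, hx, y, hy, rfl⟩, a, ha, hae⟩ ⟨-, b, hb, hbe⟩
    have hax : a = x := by
      rcases Sym2.mem_iff.1 hae with h | h
      · exact h
      · exfalso; exact hAB a (hP1 ha) (by rw [h]; exact hy.1)
    have hbx : b = x := by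
      rcases Sym2.mem_iff.1 hbe with h | h
      · exact h
      · exfalso; exact hAB b (hP2 hb) (by rw [h]; exact hy.1)
    have : a ∈ P1 ∩ P2 := ⟨ha, by rw [hax, ← hbx]; exact hb⟩
    rw [hP12] at this; exact this
  have hsub : E1 ∪ E2 ⊆ sepEdges G A B := by
    rintro e (he | he) <;> exact he.1
  calc W1.ncard + W2.ncard ≤ E1.ncard + E2.ncard := by omega
    _ = (E1 ∪ E2).ncard := (Set.ncard_union_eq hdisjE (Set.toFinite _) (Set.toFinite _)).symm
    _ ≤ (sepEdges G A B).ncard := Set.ncard_le_ncard hsub (Set.toFinite _)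


lemma two_le_pair {W : Set V} {a b : V} (hne : a ≠ b) (ha : a ∈ W) (hb : b ∈ W) :
    2 ≤ W.ncard := by
  have h : ({a, b} : Set V).ncard ≤ W.ncard := by
    apply Set.ncard_le_ncard _ (Set.toFinite _)
    intro x hx; rcases hx with rfl | rfl
    exacts [ha, hb]
  rwa [Set.ncard_pair hne] at h

lemma three_le_triple {W : Set V} {a b c : V} (h1 : a ≠ b) (h2 : a ≠ c) (h3 : b ≠ c)
    (ha : a ∈ W) (hb : b ∈ W) (hc : c ∈ W) : 3 ≤ W.ncard := by
  have h : ({a, b, c} : Set V).ncard ≤ W.ncard := by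
    apply Set.ncard_le_ncard _ (Set.toFinite _)
    intro x hx; rcases hx with rfl | rfl | rfl
    exacts [ha, hb, hc]
  rwa [Set.ncard_eq_three.2 ⟨a, b, c, h1, h2, h3, rfl⟩] at h

lemma sub_bound {X W : Set V} {t : V} (h3 : 3 ≤ X.ncard) (hsub : X ⊆ W ∪ {t}) :
    2 ≤ W.ncard := by
  have h1 := Set.ncard_le_ncard hsub (Set.toFinite _)
  have h2 := Set.ncard_union_le W ({t} : Set V)
  rw [Set.ncard_singleton] at h2
  omega

lemma locked (G : SimpleGraph V) (hK : KConnected 3 G) (A B P Q : Set V)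
    (hUn : A ∪ B = Set.univ) (hdisj : A ∩ B = ∅) (hcut : (sepEdges G A B).ncard = 3)
    (hPA : P ⊆ A) (hQA : Q ⊆ A) (hPQ : P ∩ Q = ∅) (hcover : A ⊆ P ∪ Q)
    (hP : P.Nonempty) (hQ : Q.Nonempty)
    (hnoadj : ∀ x ∈ P, ∀ y ∈ Q, ¬G.Adj x y) : False := by
  have hAB : ∀ v, v ∈ A → v ∈ B → False := by
    intro v h1 h2; have hv : v ∈ A ∩ B := ⟨h1, h2⟩; rw [hdisj] at hv; exact hv
  have hmemB : ∀ v : V, v ∉ A → v ∈ B := by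
    intro v hv
    have hv2 : v ∈ A ∪ B := by rw [hUn]; trivial
    rcases hv2 with h | h
    · exact (hv h).elim
    · exact h
  have hNSP : NS G P ⊆ B := by
    rintro v ⟨hvP, u, hu, hadj⟩
    by_contra hvB
    have hvA : v ∈ A := by by_contra h; exact hvB (hmemB v h)
    rcases hcover hvA with h | h
    · exact hvP h
    · exact hnoadj u hu v h hadj
  have hNSQ : NS G Q ⊆ B := by
    rintro v ⟨hvQ, u, hu, hadj⟩
    by_contra hvB
    have hvA : v ∈ A := by by_contra h; exact hvB (hmemB v h)
    rcases hcover hvA with h | h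
    · exact hnoadj v h u hu hadj.symm
    · exact hvQ h
  have h3P : 3 ≤ (NS G P).ncard := by
    rcases T1D G hK P hP with h | h
    · exact h
    · exfalso
      obtain ⟨q, hq⟩ := hQ
      have : q ∈ P ∪ NS G P := by rw [h]; trivial
      rcases this with h' | h'
      · have : q ∈ P ∩ Q := ⟨h', hq⟩; rw [hPQ] at this; exact this
      · exact hAB q (hQA hq) (hNSP h')
  have h3Q : 3 ≤ (NS G Q).ncard := by
    rcases T1D G hK Q hQ with h | h
    · exact h
    · exfalso
      obtain ⟨p, hp⟩ := hP
      have : p ∈ Q ∪ NS G Q := by rw [h]; trivial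
      rcases this with h' | h'
      · have : p ∈ P ∩ Q := ⟨hp, h'⟩; rw [hPQ] at this; exact this
      · exact hAB p (hPA hp) (hNSQ h')
  have := ML2 G hdisj hPA hQA hPQ (Set.subset_inter hNSP subset_rfl)
    (Set.subset_inter hNSQ subset_rfl)
  omega

lemma sepOrder_decomp (G : SimpleGraph V) (A B : Set V) :
    sepOrder G A B = (A ∩ B).ncard + (sepEdges G A B).ncard := by
  unfold sepOrder sepSet
  rw [Set.ncard_union_eq ?hd (Set.toFinite _) (Set.toFinite _),
      Set.ncard_image_of_injective _ Sum.inl_injective,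
      Set.ncard_image_of_injective _ Sum.inr_injective]
  case hd =>
    rw [Set.disjoint_left]
    rintro e ⟨a, ha, rfl⟩ ⟨b, hb, h⟩
    simp at h

lemma sepEdges_orient {G : SimpleGraph V} {C D : Set V} {e : Sym2 V}
    (he : e ∈ sepEdges G C D) :
    ∃ x y, x ∈ C \ D ∧ y ∈ D \ C ∧ G.Adj x y ∧ e = s(x, y) := by
  obtain ⟨hes, x, hx, y, hy, rfl⟩ := he
  exact ⟨x, y, hx, hy, hes, rfl⟩


def ewSet (G : SimpleGraph V) (X Y : Set V) : Set (Sym2 V) :=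
  {e | e ∈ G.edgeSet ∧ ∃ x ∈ X, ∃ y ∈ Y, e = s(x, y)}

lemma sepEdges_eq_ewSet (G : SimpleGraph V) (A B : Set V) :
    sepEdges G A B = ewSet G (A \ B) (B \ A) := rfl

lemma sepEdges_eq_ewSet' {G : SimpleGraph V} {A B : Set V} (hdisj : A ∩ B = ∅) :
    sepEdges G A B = ewSet G A B := by
  have hAB : ∀ v, v ∈ A → v ∈ B → False := by
    intro v h1 h2; have hv : v ∈ A ∩ B := ⟨h1, h2⟩; rw [hdisj] at hv; exact hv
  have h1 : A \ B = A := by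
    ext v; constructor
    · exact fun h => h.1
    · exact fun h => ⟨h, fun h2 => hAB v h h2⟩
  have h2 : B \ A = B := by
    ext v; constructor
    · exact fun h => h.1
    · exact fun h => ⟨h, fun h2 => hAB v h2 h⟩
  rw [sepEdges_eq_ewSet, h1, h2]

lemma ewSet_comm (G : SimpleGraph V) (X Y : Set V) : ewSet G X Y = ewSet G Y X := by
  ext e
  constructor <;>
  · rintro ⟨he, x, hx, y, hy, rfl⟩
    exact ⟨he, y, hy, x, hx, Sym2.eq_swap⟩

lemma ew_add (G : SimpleGraph V) {X Y1 Y2 : Set V} (hY : Y1 ∩ Y2 = ∅) (hX2 : X ∩ Y2 = ∅) :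
    (ewSet G X (Y1 ∪ Y2)).ncard = (ewSet G X Y1).ncard + (ewSet G X Y2).ncard := by
  have hset : ewSet G X (Y1 ∪ Y2) = ewSet G X Y1 ∪ ewSet G X Y2 := by
    ext e
    constructor
    · rintro ⟨he, x, hx, y, hy | hy, rfl⟩
      · exact Or.inl ⟨he, x, hx, y, hy, rfl⟩
      · exact Or.inr ⟨he, x, hx, y, hy, rfl⟩
    · rintro (⟨he, x, hx, y, hy, rfl⟩ | ⟨he, x, hx, y, hy, rfl⟩)
      · exact ⟨he, x, hx, y, Or.inl hy, rfl⟩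
      · exact ⟨he, x, hx, y, Or.inr hy, rfl⟩
  rw [hset]
  apply Set.ncard_union_eq _ (Set.toFinite _) (Set.toFinite _)
  rw [Set.disjoint_left]
  rintro e ⟨he, x, hx, y, hy, rfl⟩ ⟨he', x', hx', y', hy', heq⟩
  rw [Sym2.eq_iff] at heq
  rcases heq with ⟨h1, h2⟩ | ⟨h1, h2⟩
  · have : y ∈ Y1 ∩ Y2 := ⟨hy, h2 ▸ hy'⟩
    rw [hY] at this; exact this
  · have : x ∈ X ∩ Y2 := ⟨hx, h1 ▸ hy'⟩
    rw [hX2] at this; exact this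

lemma T2c (G : SimpleGraph V) (hK : KConnected 3 G) (U : Set V) (hU : U.Nonempty)
    (hc3 : 3 ≤ (Uᶜ).ncard) : 3 ≤ (ewSet G U Uᶜ).ncard := by
  classical
  have h3 : 3 ≤ (NS G U).ncard := by
    rcases T1D G hK U hU with h | h
    · exact h
    · refine le_trans hc3 (Set.ncard_le_ncard ?_ (Set.toFinite _))
      intro v hv
      have : v ∈ U ∪ NS G U := by rw [h]; trivial
      rcases this with h' | h'
      · exact (hv h').elim
      · exact h'
  refine le_trans h3 ?_
  set f : V → V := fun w => if h : ∃ a ∈ U, G.Adj a w then h.choose else w with hf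
  have hfP : ∀ w ∈ NS G U, f w ∈ U ∧ G.Adj (f w) w := by
    rintro w ⟨hw, a, ha, hadj⟩
    have hex : ∃ a ∈ U, G.Adj a w := ⟨a, ha, hadj⟩
    simp only [hf, dif_pos hex]
    exact ⟨hex.choose_spec.1, hex.choose_spec.2⟩
  apply Set.ncard_le_ncard_of_injOn (fun w => s(f w, w))
  · intro w hw
    obtain ⟨hfw, hadj⟩ := hfP w hw
    exact ⟨hadj, f w, hfw, w, hw.1, rfl⟩
  · intro w hw w' hw' heq
    rw [Sym2.eq_iff] at heq
    rcases heq with ⟨h1, h2⟩ | ⟨h1, h2⟩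
    · exact h2
    · exfalso
      have : w ∈ U := by rw [h2]; exact (hfP w' hw').1
      exact hw.1 this

lemma caseS0 (G : SimpleGraph V) (hK : KConnected 3 G) (A B c d : Set V)
    (hUn : A ∪ B = Set.univ) (hdisj : A ∩ B = ∅)
    (hcut : (ewSet G A B).ncard = 3)
    (hcdUn : c ∪ d = Set.univ) (hcd : c ∩ d = ∅)
    (hF : (ewSet G c d).ncard = 3)
    (h1 : (A ∩ c).Nonempty) (h2 : (A ∩ d).Nonempty)
    (h3 : (B ∩ c).Nonempty) (h4 : (B ∩ d).Nonempty) : False := by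
  have hAB : ∀ v, v ∈ A → v ∈ B → False := by
    intro v ha hb; have hv : v ∈ A ∩ B := ⟨ha, hb⟩; rw [hdisj] at hv; exact hv
  have hcdf : ∀ v, v ∈ c → v ∈ d → False := by
    intro v ha hb; have hv : v ∈ c ∩ d := ⟨ha, hb⟩; rw [hcd] at hv; exact hv
  have hABu : ∀ v : V, v ∈ A ∨ v ∈ B := by
    intro v; have : v ∈ A ∪ B := by rw [hUn]; trivial
    exact this
  have hcdu : ∀ v : V, v ∈ c ∨ v ∈ d := by
    intro v; have : v ∈ c ∪ d := by rw [hcdUn]; trivial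
    exact this
  set X1 := A ∩ c with hX1
  set X2 := A ∩ d with hX2
  set X3 := B ∩ c with hX3
  set X4 := B ∩ d with hX4
  have dd : ∀ (X Y : Set V), (∀ v, v ∈ X → v ∈ Y → False) → X ∩ Y = ∅ := by
    intro X Y h; ext v
    simp only [Set.mem_inter_iff, Set.mem_empty_iff_false, iff_false, not_and]
    intro h1 h2; exact h v h1 h2
  have d12 : X1 ∩ X2 = ∅ := dd _ _ (fun v hv1 hv2 => hcdf v hv1.2 hv2.2)
  have d13 : X1 ∩ X3 = ∅ := dd _ _ (fun v hv1 hv2 => hAB v hv1.1 hv2.1)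
  have d14 : X1 ∩ X4 = ∅ := dd _ _ (fun v hv1 hv2 => hAB v hv1.1 hv2.1)
  have d23 : X2 ∩ X3 = ∅ := dd _ _ (fun v hv1 hv2 => hAB v hv1.1 hv2.1)
  have d24 : X2 ∩ X4 = ∅ := dd _ _ (fun v hv1 hv2 => hAB v hv1.1 hv2.1)
  have d34 : X3 ∩ X4 = ∅ := dd _ _ (fun v hv1 hv2 => hcdf v hv1.2 hv2.2)
  have d1_34 : X1 ∩ (X3 ∪ X4) = ∅ := dd _ _ (by rintro v hv1 (hv2 | hv2) <;> exact hAB v hv1.1 hv2.1)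
  have d2_34 : X2 ∩ (X3 ∪ X4) = ∅ := dd _ _ (by rintro v hv1 (hv2 | hv2) <;> exact hAB v hv1.1 hv2.1)
  have d3_12 : X3 ∩ (X1 ∪ X2) = ∅ := dd _ _ (by rintro v hv1 (hv2 | hv2) <;> exact hAB v hv2.1 hv1.1)
  have d4_12 : X4 ∩ (X1 ∪ X2) = ∅ := dd _ _ (by rintro v hv1 (hv2 | hv2) <;> exact hAB v hv2.1 hv1.1)
  have d34_2 : (X3 ∪ X4) ∩ X2 = ∅ := dd _ _ (by rintro v (hv1 | hv1) hv2 <;> exact hAB v hv2.1 hv1.1)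
  have d24_3 : (X2 ∪ X4) ∩ X3 = ∅ := dd _ _ (by rintro v (hv1 | hv1) hv2 <;> [exact hAB v hv1.1 hv2.1; exact hcdf v hv2.2 hv1.2])
  -- complements and unions
  have hC1 : X1ᶜ = X2 ∪ (X3 ∪ X4) := by
    ext v
    simp only [hX1, hX2, hX3, hX4, Set.mem_compl_iff, Set.mem_inter_iff, Set.mem_union, not_and]
    have := hABu v; have := hcdu v
    have := hAB v; have := hcdf v
    tauto
  have hC2 : X2ᶜ = X1 ∪ (X3 ∪ X4) := by
    ext v
    simp only [hX1, hX2, hX3, hX4, Set.mem_compl_iff, Set.mem_inter_iff, Set.mem_union, not_and]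
    have := hABu v; have := hcdu v
    have := hAB v; have := hcdf v
    tauto
  have hC3 : X3ᶜ = X4 ∪ (X1 ∪ X2) := by
    ext v
    simp only [hX1, hX2, hX3, hX4, Set.mem_compl_iff, Set.mem_inter_iff, Set.mem_union, not_and]
    have := hABu v; have := hcdu v
    have := hAB v; have := hcdf v
    tauto
  have hC4 : X4ᶜ = X3 ∪ (X1 ∪ X2) := by
    ext v
    simp only [hX1, hX2, hX3, hX4, Set.mem_compl_iff, Set.mem_inter_iff, Set.mem_union, not_and]
    have := hABu v; have := hcdu v
    have := hAB v; have := hcdf v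
    tauto
  have hAu : A = X1 ∪ X2 := by
    ext v
    simp only [hX1, hX2, Set.mem_inter_iff, Set.mem_union]
    have := hcdu v; tauto
  have hBu : B = X3 ∪ X4 := by
    ext v
    simp only [hX3, hX4, Set.mem_inter_iff, Set.mem_union]
    have := hcdu v; tauto
  have hcu : c = X1 ∪ X3 := by
    ext v
    simp only [hX1, hX3, Set.mem_inter_iff, Set.mem_union]
    have := hABu v; tauto
  have hdu : d = X2 ∪ X4 := by
    ext v
    simp only [hX2, hX4, Set.mem_inter_iff, Set.mem_union]
    have := hABu v; tauto
  -- nonempty compl bounds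
  have hne : ∀ (Xa Xb Xc : Set V) (U : Set V), Xa ∩ Xb = ∅ → Xa ∩ Xc = ∅ → Xb ∩ Xc = ∅ →
      Xa.Nonempty → Xb.Nonempty → Xc.Nonempty → Xa ∪ (Xb ∪ Xc) = Uᶜ → 3 ≤ (Uᶜ).ncard := by
    intro Xa Xb Xc U dab dac dbc ⟨a, ha⟩ ⟨b, hb⟩ ⟨cc, hcc⟩ hU
    have hnd : ∀ (X Y : Set V) (x : V), X ∩ Y = ∅ → x ∈ X → x ∈ Y → False := by
      intro X Y x h hx hy; have : x ∈ X ∩ Y := ⟨hx, hy⟩; rw [h] at this; exact this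
    apply three_le_triple (W := Uᶜ) (a := a) (b := b) (c := cc)
    · intro h; exact hnd _ _ a dab ha (h ▸ hb)
    · intro h; exact hnd _ _ a dac ha (h ▸ hcc)
    · intro h; exact hnd _ _ b dbc hb (h ▸ hcc)
    · rw [← hU]; exact Or.inl ha
    · rw [← hU]; exact Or.inr (Or.inl hb)
    · rw [← hU]; exact Or.inr (Or.inr hcc)
  -- corner inequalities
  have c1 : 3 ≤ (ewSet G X1 X1ᶜ).ncard :=
    T2c G hK X1 h1 (hne X2 X3 X4 X1 d23 d24 d34 h2 h3 h4 hC1.symm)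
  have c2 : 3 ≤ (ewSet G X2 X2ᶜ).ncard :=
    T2c G hK X2 h2 (hne X1 X3 X4 X2 d13 d14 d34 h1 h3 h4 hC2.symm)
  have c3 : 3 ≤ (ewSet G X3 X3ᶜ).ncard :=
    T2c G hK X3 h3 (hne X4 X1 X2 X3 (by rw [Set.inter_comm]; exact d14)
      (by rw [Set.inter_comm]; exact d24) d12 h4 h1 h2 hC3.symm)
  have c4 : 3 ≤ (ewSet G X4 X4ᶜ).ncard :=
    T2c G hK X4 h4 (hne X3 X1 X2 X4 (by rw [Set.inter_comm]; exact d13)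
      (by rw [Set.inter_comm]; exact d23) d12 h3 h1 h2 hC4.symm)
  -- decompositions
  have e1 : (ewSet G X1 X1ᶜ).ncard =
      (ewSet G X1 X2).ncard + ((ewSet G X1 X3).ncard + (ewSet G X1 X4).ncard) := by
    rw [hC1, ew_add G d2_34 d1_34, ew_add G d34 d14]
  have e2 : (ewSet G X2 X2ᶜ).ncard =
      (ewSet G X1 X2).ncard + ((ewSet G X2 X3).ncard + (ewSet G X2 X4).ncard) := by
    rw [hC2, ew_add G d1_34 d2_34, ew_add G d34 d24, ewSet_comm G X2 X1]
  have e3 : (ewSet G X3 X3ᶜ).ncard =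
      (ewSet G X3 X4).ncard + ((ewSet G X1 X3).ncard + (ewSet G X2 X3).ncard) := by
    rw [hC3, ew_add G d4_12 d3_12, ew_add G d12 (by rw [Set.inter_comm]; exact d23),
      ewSet_comm G X3 X1, ewSet_comm G X3 X2]
  have e4 : (ewSet G X4 X4ᶜ).ncard =
      (ewSet G X3 X4).ncard + ((ewSet G X1 X4).ncard + (ewSet G X2 X4).ncard) := by
    rw [hC4, ew_add G d3_12 d4_12, ew_add G d12 (by rw [Set.inter_comm]; exact d24),
      ewSet_comm G X4 X3, ewSet_comm G X4 X1, ewSet_comm G X4 X2]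
  have tAB : (ewSet G A B).ncard =
      ((ewSet G X1 X3).ncard + (ewSet G X1 X4).ncard) +
      ((ewSet G X2 X3).ncard + (ewSet G X2 X4).ncard) := by
    rw [hAu, hBu, ewSet_comm G (X1 ∪ X2), ew_add G d12 d34_2,
      ewSet_comm G (X3 ∪ X4) X1, ewSet_comm G (X3 ∪ X4) X2,
      ew_add G d34 d14, ew_add G d34 d24]
  have tF : (ewSet G c d).ncard =
      ((ewSet G X1 X2).ncard + (ewSet G X1 X4).ncard) +
      ((ewSet G X2 X3).ncard + (ewSet G X3 X4).ncard) := by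
    rw [hcu, hdu, ewSet_comm G (X1 ∪ X3), ew_add G d13 d24_3,
      ewSet_comm G (X2 ∪ X4) X1, ewSet_comm G (X2 ∪ X4) X3,
      ew_add G d24 d14, ew_add G d24 d34,
      ewSet_comm G X3 X2]
  rw [hcut] at tAB
  rw [hF] at tF
  omega

lemma corner_two (G : SimpleGraph V) (hK : KConnected 3 G) {U O : Set V} {t : V}
    (hU : U.Nonempty) (hsub : ∀ v ∈ NS G U, v ∈ O ∨ v = t)
    (hcov : U ∪ NS G U = Set.univ → 2 ≤ (O ∩ NS G U).ncard) :
    2 ≤ (O ∩ NS G U).ncard := by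
  rcases T1D G hK U hU with h3 | h
  · apply sub_bound h3
    intro v hv
    rcases hsub v hv with h | h
    · exact Or.inl ⟨h, hv⟩
    · exact Or.inr h
  · exact hcov h

lemma dd {X Y : Set V} (h : ∀ v, v ∈ X → v ∈ Y → False) : X ∩ Y = ∅ := by
  ext v
  simp only [Set.mem_inter_iff, Set.mem_empty_iff_false, iff_false, not_and]
  intro h1 h2; exact h v h1 h2

lemma four_le_three (G : SimpleGraph V) {A B : Set V} (P1 P2 : Set V) (hdisj : A ∩ B = ∅)
    (hP1 : P1 ⊆ A) (hP2 : P2 ⊆ A) (hP12 : P1 ∩ P2 = ∅)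
    (hcut : (sepEdges G A B).ncard = 3)
    (w1 : 2 ≤ (B ∩ NS G P1).ncard) (w2 : 2 ≤ (B ∩ NS G P2).ncard) : False := by
  have := ML2 G hdisj hP1 hP2 hP12 (subset_refl _) (subset_refl _)
  omega

lemma ns_singleton (G : SimpleGraph V) {s : V} {Z B : Set V}
    (h2 : 2 ≤ (G.neighborSet s ∩ Z).ncard)
    (hZ : ∀ v, G.Adj s v → v ∈ Z → v ∈ B) : 2 ≤ (B ∩ NS G {s}).ncard := by
  refine le_trans h2 (Set.ncard_le_ncard ?_ (Set.toFinite _))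
  rintro v ⟨hadj, hvZ⟩
  refine ⟨hZ v hadj hvZ, ?_, s, rfl, hadj⟩
  intro hv
  rw [Set.mem_singleton_iff] at hv
  subst hv
  exact G.loopless.irrefl v hadj

/-- |S|=3, case A∩c = ∅. -/
lemma caseS3aux (G : SimpleGraph V) (hK : KConnected 3 G) (A B c d : Set V) (s1 s2 s3 : V)
    (hUn : A ∪ B = Set.univ) (hdisj : A ∩ B = ∅)
    (hcut : (sepEdges G A B).ncard = 3) (hA2 : 2 ≤ A.ncard)
    (hc : c.Nonempty) (hcd : c ∩ d = ∅)
    (hpart : ∀ v : V, v ∈ c ∨ v ∈ d ∨ v = s1 ∨ v = s2 ∨ v = s3)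
    (hs1c : s1 ∉ c) (hs1d : s1 ∉ d)
    (hnoadj : ∀ x ∈ c, ∀ y ∈ d, ¬G.Adj x y)
    (hdeg1c : 2 ≤ (G.neighborSet s1 ∩ (c ∪ {s1, s2, s3})).ncard)
    (hs1A : s1 ∈ A) (hs2B : s2 ∈ B) (hs3B : s3 ∈ B)
    (hAc : A ∩ c = ∅) : False := by
  have hAB : ∀ v, v ∈ A → v ∈ B → False := by
    intro v ha hb; have hv : v ∈ A ∩ B := ⟨ha, hb⟩; rw [hdisj] at hv; exact hv
  have hmemB : ∀ v : V, v ∉ A → v ∈ B := by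
    intro v hv
    have hv2 : v ∈ A ∪ B := by rw [hUn]; trivial
    rcases hv2 with h | h
    · exact (hv h).elim
    · exact h
  have hnd : ∀ (X Y : Set V) (x : V), X ∩ Y = ∅ → x ∈ X → x ∈ Y → False := by
    intro X Y x h hx hy; have : x ∈ X ∩ Y := ⟨hx, hy⟩; rw [h] at this; exact this
  -- A ∩ d nonempty
  have hAd : (A ∩ d).Nonempty := by
    rcases Set.eq_empty_or_nonempty (A ∩ d) with h | h
    · exfalso
      have hsub : A ⊆ {s1} := by
        intro v hv
        rcases hpart v with hl | hl | hl | hl | hl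
        · exact (hnd A c v hAc hv hl).elim
        · exact (hnd A d v h hv hl).elim
        · exact hl
        · exact (hAB v hv (hl ▸ hs2B)).elim
        · exact (hAB v hv (hl ▸ hs3B)).elim
      have := Set.ncard_le_ncard hsub (Set.toFinite _)
      rw [Set.ncard_singleton] at this
      omega
    · exact h
  refine four_le_three G {s1} (A ∩ d) hdisj (Set.singleton_subset_iff.2 hs1A)
    Set.inter_subset_left
    (dd fun v h1 h2 => hs1d (by rw [Set.mem_singleton_iff] at h1; rw [h1] at h2; exact h2.2))
    hcut ?_ ?_
  · -- 2 ≤ B ∩ N(s1)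
    apply ns_singleton G hdeg1c
    intro v hadj hvZ
    rcases hvZ with h | h
    · apply hmemB; intro hvA; exact hnd A c v hAc hvA h
    · rcases h with h | h | h
      · exact ((G.ne_of_adj hadj) h.symm).elim
      · exact h ▸ hs2B
      · exact h ▸ hs3B
  · -- 2 ≤ B ∩ NS (A∩d)
    apply corner_two G hK hAd (t := s1)
    · rintro v ⟨hvU, u, hu, hadj⟩
      by_cases hvB : v ∈ B
      · exact Or.inl hvB
      have hvA : v ∈ A := by
        by_contra h; exact hvB (hmemB v h)
      rcases hpart v with hl | hl | hl | hl | hl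
      · exact (hnd A c v hAc hvA hl).elim
      · exact (hvU ⟨hvA, hl⟩).elim
      · exact Or.inr hl
      · exact (hAB v hvA (hl ▸ hs2B)).elim
      · exact (hAB v hvA (hl ▸ hs3B)).elim
    · intro hcov
      exfalso
      obtain ⟨x0, hx0⟩ := hc
      have : x0 ∈ (A ∩ d) ∪ NS G (A ∩ d) := by rw [hcov]; trivial
      rcases this with h | ⟨-, u, hu, hadj⟩
      · exact hnd c d x0 hcd hx0 h.2
      · exact hnoadj x0 hx0 u hu.2 hadj.symm

/-- |S|=3 core: s1 ∈ A, s2, s3 ∈ B. -/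
lemma caseS3 (G : SimpleGraph V) (hK : KConnected 3 G) (A B c d : Set V) (s1 s2 s3 : V)
    (hUn : A ∪ B = Set.univ) (hdisj : A ∩ B = ∅)
    (hcut : (sepEdges G A B).ncard = 3) (hA2 : 2 ≤ A.ncard)
    (hc : c.Nonempty) (hd : d.Nonempty) (hcd : c ∩ d = ∅)
    (hpart : ∀ v : V, v ∈ c ∨ v ∈ d ∨ v = s1 ∨ v = s2 ∨ v = s3)
    (hs1c : s1 ∉ c) (hs1d : s1 ∉ d)
    (hnoadj : ∀ x ∈ c, ∀ y ∈ d, ¬G.Adj x y)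
    (hdeg1c : 2 ≤ (G.neighborSet s1 ∩ (c ∪ {s1, s2, s3})).ncard)
    (hdeg1d : 2 ≤ (G.neighborSet s1 ∩ (d ∪ {s1, s2, s3})).ncard)
    (hs1A : s1 ∈ A) (hs2B : s2 ∈ B) (hs3B : s3 ∈ B) : False := by
  have hAB : ∀ v, v ∈ A → v ∈ B → False := by
    intro v ha hb; have hv : v ∈ A ∩ B := ⟨ha, hb⟩; rw [hdisj] at hv; exact hv
  have hmemB : ∀ v : V, v ∉ A → v ∈ B := by
    intro v hv
    have hv2 : v ∈ A ∪ B := by rw [hUn]; trivial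
    rcases hv2 with h | h
    · exact (hv h).elim
    · exact h
  have hnd : ∀ (X Y : Set V) (x : V), X ∩ Y = ∅ → x ∈ X → x ∈ Y → False := by
    intro X Y x h hx hy; have : x ∈ X ∩ Y := ⟨hx, hy⟩; rw [h] at this; exact this
  rcases Set.eq_empty_or_nonempty (A ∩ c) with hAc | hAc
  · exact caseS3aux G hK A B c d s1 s2 s3 hUn hdisj hcut hA2 hc hcd hpart hs1c hs1d hnoadj
      hdeg1c hs1A hs2B hs3B hAc
  rcases Set.eq_empty_or_nonempty (A ∩ d) with hAd | hAd
  · refine caseS3aux G hK A B d c s1 s2 s3 hUn hdisj hcut hA2 hd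
      (by rw [Set.inter_comm]; exact hcd) ?_ hs1d hs1c
      (fun x hx y hy hadj => hnoadj y hy x hx hadj.symm) hdeg1d hs1A hs2B hs3B hAd
    intro v; rcases hpart v with h | h | h | h | h
    exacts [Or.inr (Or.inl h), Or.inl h, Or.inr (Or.inr (Or.inl h)),
      Or.inr (Or.inr (Or.inr (Or.inl h))), Or.inr (Or.inr (Or.inr (Or.inr h)))]
  -- both corners nonempty
  refine four_le_three G (A ∩ c) (A ∩ d) hdisj Set.inter_subset_left
    Set.inter_subset_left
    (dd fun v h1 h2 => hnd c d v hcd h1.2 h2.2) hcut ?_ ?_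
  · apply corner_two G hK hAc (t := s1)
    · rintro v ⟨hvU, u, hu, hadj⟩
      by_cases hvB : v ∈ B
      · exact Or.inl hvB
      have hvA : v ∈ A := by by_contra h; exact hvB (hmemB v h)
      rcases hpart v with hl | hl | hl | hl | hl
      · exact (hvU ⟨hvA, hl⟩).elim
      · exact (hnoadj u hu.2 v hl hadj).elim
      · exact Or.inr hl
      · exact (hAB v hvA (hl ▸ hs2B)).elim
      · exact (hAB v hvA (hl ▸ hs3B)).elim
    · intro hcov
      exfalso
      obtain ⟨y0, hy0⟩ := hd
      have : y0 ∈ (A ∩ c) ∪ NS G (A ∩ c) := by rw [hcov]; trivial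
      rcases this with h | ⟨-, u, hu, hadj⟩
      · exact hnd c d y0 hcd h.2 hy0
      · exact hnoadj u hu.2 y0 hy0 hadj
  · apply corner_two G hK hAd (t := s1)
    · rintro v ⟨hvU, u, hu, hadj⟩
      by_cases hvB : v ∈ B
      · exact Or.inl hvB
      have hvA : v ∈ A := by by_contra h; exact hvB (hmemB v h)
      rcases hpart v with hl | hl | hl | hl | hl
      · exact (hnoadj v hl u hu.2 hadj.symm).elim
      · exact (hvU ⟨hvA, hl⟩).elim
      · exact Or.inr hl
      · exact (hAB v hvA (hl ▸ hs2B)).elim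
      · exact (hAB v hvA (hl ▸ hs3B)).elim
    · intro hcov
      exfalso
      obtain ⟨x0, hx0⟩ := hc
      have : x0 ∈ (A ∩ d) ∪ NS G (A ∩ d) := by rw [hcov]; trivial
      rcases this with h | ⟨-, u, hu, hadj⟩
      · exact hnd c d x0 hcd hx0 h.2
      · exact hnoadj x0 hx0 u hu.2 hadj.symm

lemma pair_forced {W : Set V} {a b : V} (hab : a ≠ b) (hsub : W ⊆ {a, b})
    (h2 : 2 ≤ W.ncard) : a ∈ W ∧ b ∈ W := by
  have heq : W = {a, b} := by
    apply Set.eq_of_subset_of_ncard_le hsub _ (Set.toFinite _)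
    rw [Set.ncard_pair hab]; exact h2
  rw [heq]
  exact ⟨Or.inl rfl, Or.inr rfl⟩

/-- |S|=2, both separator vertices on the same side `A`. -/
lemma caseS2same (G : SimpleGraph V) (hK : KConnected 3 G) (A B c d : Set V)
    (s1 s2 x y : V)
    (hUn : A ∪ B = Set.univ) (hdisj : A ∩ B = ∅)
    (hcut : (sepEdges G A B).ncard = 3)
    (hcd : c ∩ d = ∅)
    (hpart : ∀ v : V, v ∈ c ∨ v ∈ d ∨ v = s1 ∨ v = s2)
    (hs1c : s1 ∉ c) (hs1d : s1 ∉ d) (hs2c : s2 ∉ c) (hs2d : s2 ∉ d) (hs12 : s1 ≠ s2)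
    (hxc : x ∈ c) (hyd : y ∈ d)
    (hchar : ∀ u ∈ c, ∀ v ∈ d, G.Adj u v → u = x ∧ v = y)
    (hs1A : s1 ∈ A) (hs2A : s2 ∈ A)
    (hnnBc : ¬B ⊆ c) (hnnBd : ¬B ⊆ d) : False := by
  have hAB : ∀ v, v ∈ A → v ∈ B → False := by
    intro v ha hb; have hv : v ∈ A ∩ B := ⟨ha, hb⟩; rw [hdisj] at hv; exact hv
  have hmemA : ∀ v : V, v ∉ B → v ∈ A := by
    intro v hv
    have hv2 : v ∈ A ∪ B := by rw [hUn]; trivial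
    rcases hv2 with h | h
    · exact h
    · exact (hv h).elim
  have hBcd : ∀ v ∈ B, v ∈ c ∨ v ∈ d := by
    intro v hv
    rcases hpart v with h | h | h | h
    · exact Or.inl h
    · exact Or.inr h
    · exact (hAB v (h ▸ hs1A) hv).elim
    · exact (hAB v (h ▸ hs2A) hv).elim
  have hBc : (B ∩ c).Nonempty := by
    rcases Set.eq_empty_or_nonempty (B ∩ c) with h | h
    · exfalso
      apply hnnBd
      intro v hv
      rcases hBcd v hv with h' | h'
      · exfalso; have : v ∈ B ∩ c := ⟨hv, h'⟩; rw [h] at this; exact this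
      · exact h'
    · exact h
  have hBd : (B ∩ d).Nonempty := by
    rcases Set.eq_empty_or_nonempty (B ∩ d) with h | h
    · exfalso
      apply hnnBc
      intro v hv
      rcases hBcd v hv with h' | h'
      · exact h'
      · exfalso; have : v ∈ B ∩ d := ⟨hv, h'⟩; rw [h] at this; exact this
    · exact h
  have hUn' : B ∪ A = Set.univ := by rw [Set.union_comm]; exact hUn
  have hdisj' : B ∩ A = ∅ := by rw [Set.inter_comm]; exact hdisj
  have hcut' : (sepEdges G B A).ncard = 3 := by rw [← sepEdges_comm]; exact hcut
  by_cases hadjB : ∃ u ∈ B ∩ c, ∃ v ∈ B ∩ d, G.Adj u v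
  · obtain ⟨u, hu, v, hv, hadj⟩ := hadjB
    obtain ⟨hux, hvy⟩ := hchar u hu.2 v hv.2 hadj
    have hxB : x ∈ B ∩ c := hux ▸ hu
    have hyB : y ∈ B ∩ d := hvy ▸ hv
    refine four_le_three G (B ∩ c) (B ∩ d) hdisj' Set.inter_subset_left
      Set.inter_subset_left (dd fun v h1 h2 => by
        have : v ∈ c ∩ d := ⟨h1.2, h2.2⟩
        rw [hcd] at this; exact this) hcut' ?_ ?_
    · apply corner_two G hK ⟨x, hxB⟩ (t := y)
      · rintro w ⟨hwU, z, hz, hadjzw⟩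
        by_cases hwA : w ∈ A
        · exact Or.inl hwA
        have hwB : w ∈ B := by
          rcases (by rw [hUn]; trivial : w ∈ A ∪ B) with h | h
          · exact (hwA h).elim
          · exact h
        rcases hpart w with h | h | h | h
        · exact (hwU ⟨hwB, h⟩).elim
        · exact Or.inr (hchar z hz.2 w h hadjzw).2
        · exact (hwA (h ▸ hs1A)).elim
        · exact (hwA (h ▸ hs2A)).elim
      · intro hcov
        apply two_le_pair hs12
        · refine ⟨hs1A, ?_, ?_⟩
          · intro h; exact hs1c h.2
          · have : s1 ∈ (B ∩ c) ∪ NS G (B ∩ c) := by rw [hcov]; trivial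
            rcases this with h | h
            · exact (hs1c h.2).elim
            · exact h.2
        · refine ⟨hs2A, ?_, ?_⟩
          · intro h; exact hs2c h.2
          · have : s2 ∈ (B ∩ c) ∪ NS G (B ∩ c) := by rw [hcov]; trivial
            rcases this with h | h
            · exact (hs2c h.2).elim
            · exact h.2
    · apply corner_two G hK ⟨y, hyB⟩ (t := x)
      · rintro w ⟨hwU, z, hz, hadjzw⟩
        by_cases hwA : w ∈ A
        · exact Or.inl hwA
        have hwB : w ∈ B := by
          rcases (by rw [hUn]; trivial : w ∈ A ∪ B) with h | h
          · exact (hwA h).elim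
          · exact h
        rcases hpart w with h | h | h | h
        · exact Or.inr (hchar w h z hz.2 hadjzw.symm).1
        · exact (hwU ⟨hwB, h⟩).elim
        · exact (hwA (h ▸ hs1A)).elim
        · exact (hwA (h ▸ hs2A)).elim
      · intro hcov
        apply two_le_pair hs12
        · refine ⟨hs1A, ?_, ?_⟩
          · intro h; exact hs1d h.2
          · have : s1 ∈ (B ∩ d) ∪ NS G (B ∩ d) := by rw [hcov]; trivial
            rcases this with h | h
            · exact (hs1d h.2).elim
            · exact h.2
        · refine ⟨hs2A, ?_, ?_⟩
          · intro h; exact hs2d h.2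
          · have : s2 ∈ (B ∩ d) ∪ NS G (B ∩ d) := by rw [hcov]; trivial
            rcases this with h | h
            · exact (hs2d h.2).elim
            · exact h.2
  · push_neg at hadjB
    refine locked G hK B A (B ∩ c) (B ∩ d) hUn' hdisj' hcut'
      Set.inter_subset_left Set.inter_subset_left
      (dd fun v h1 h2 => by
        have : v ∈ c ∩ d := ⟨h1.2, h2.2⟩
        rw [hcd] at this; exact this)
      ?_ hBc hBd ?_
    · intro v hv
      rcases hBcd v hv with h | h
      · exact Or.inl ⟨hv, h⟩
      · exact Or.inr ⟨hv, h⟩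
    · intro u hu v hv
      exact hadjB u hu v hv

/-- |S|=2, split s1 ∈ A, s2 ∈ B, `d = {y}` with `y ∈ A`. -/
lemma caseS2dSing (G : SimpleGraph V) (hK : KConnected 3 G) (A B c d : Set V)
    (s1 s2 y : V)
    (hUn : A ∪ B = Set.univ) (hdisj : A ∩ B = ∅)
    (hcut : (sepEdges G A B).ncard = 3) (hB2 : 2 ≤ B.ncard)
    (hcd : c ∩ d = ∅)
    (hpart : ∀ v : V, v ∈ c ∨ v ∈ d ∨ v = s1 ∨ v = s2)
    (hs1c : s1 ∉ c) (hs1d : s1 ∉ d) (hs2c : s2 ∉ c) (hs2d : s2 ∉ d) (hs12 : s1 ≠ s2)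
    (hyd : y ∈ d) (hdsub : d ⊆ {y})
    (hdeg2d : 2 ≤ (G.neighborSet s2 ∩ (d ∪ {s1, s2})).ncard)
    (hs1A : s1 ∈ A) (hs2B : s2 ∈ B) (hyA : y ∈ A) : False := by
  have hAB : ∀ v, v ∈ A → v ∈ B → False := by
    intro v ha hb; have hv : v ∈ A ∩ B := ⟨ha, hb⟩; rw [hdisj] at hv; exact hv
  have hys1 : y ≠ s1 := fun h => hs1d (h ▸ hyd)
  -- forced adjacencies of s2
  have hforced : y ∈ G.neighborSet s2 ∧ s1 ∈ G.neighborSet s2 := by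
    have hsub : G.neighborSet s2 ∩ (d ∪ {s1, s2}) ⊆ {y, s1} := by
      rintro v ⟨hadj, hv⟩
      rcases hv with h | h
      · exact Or.inl (hdsub h)
      · rcases h with h | h
        · exact Or.inr h
        · exact ((G.ne_of_adj hadj) h.symm).elim
    have := pair_forced hys1 hsub hdeg2d
    exact ⟨this.1.1, this.2.1⟩
  have hUn' : B ∪ A = Set.univ := by rw [Set.union_comm]; exact hUn
  have hdisj' : B ∩ A = ∅ := by rw [Set.inter_comm]; exact hdisj
  have hcut' : (sepEdges G B A).ncard = 3 := by rw [← sepEdges_comm]; exact hcut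
  -- B ∩ c nonempty
  have hBc : (B ∩ c).Nonempty := by
    obtain ⟨b1, b2, hne, hsub⟩ : ∃ b1 b2, b1 ≠ b2 ∧ ({b1, b2} : Set V) ⊆ B := by
      obtain ⟨b1, hb1⟩ : B.Nonempty := by
        rcases Set.eq_empty_or_nonempty B with h | h
        · rw [h] at hB2; simp at hB2
        · exact h
      rcases Set.eq_empty_or_nonempty (B \ {b1}) with h | ⟨b2, hb2⟩
      · exfalso
        have : B ⊆ {b1} := by
          intro v hv
          by_contra hne
          have : v ∈ B \ {b1} := ⟨hv, hne⟩
          rw [h] at this; exact this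
        have := Set.ncard_le_ncard this (Set.toFinite _)
        rw [Set.ncard_singleton] at this; omega
      · exact ⟨b1, b2, fun h => hb2.2 (h ▸ rfl), by
          rintro v (rfl | rfl); exacts [hb1, hb2.1]⟩
    have hbc : ∀ b ∈ B, b ≠ s2 → b ∈ c := by
      intro b hb hbs
      rcases hpart b with h | h | h | h
      · exact h
      · have heq : b = y := Set.mem_singleton_iff.1 (hdsub h)
        exact (hAB y hyA (heq ▸ hb)).elim
      · exact (hAB b (h ▸ hs1A) hb).elim
      · exact (hbs h).elim
    by_cases h1 : b1 = s2
    · exact ⟨b2, hsub (Or.inr rfl), hbc b2 (hsub (Or.inr rfl)) (by rw [← h1]; exact fun h => hne h.symm)⟩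
    · exact ⟨b1, hsub (Or.inl rfl), hbc b1 (hsub (Or.inl rfl)) h1⟩
  refine four_le_three G {s2} (B ∩ c) hdisj' (Set.singleton_subset_iff.2 hs2B)
    Set.inter_subset_left
    (dd fun v h1 h2 => hs2c (by rw [Set.mem_singleton_iff] at h1; rw [h1] at h2; exact h2.2))
    hcut' ?_ ?_
  · -- A ∩ NS {s2} ⊇ {s1, y}
    apply two_le_pair hys1.symm (a := s1) (b := y)
    · exact ⟨hs1A, fun h => hs12 (Set.mem_singleton_iff.1 h), s2, rfl, hforced.2⟩
    · exact ⟨hyA, fun h => hs2d (by rw [Set.mem_singleton_iff] at h; rw [← h]; exact hyd),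
        s2, rfl, hforced.1⟩
  · apply corner_two G hK hBc (t := s2)
    · rintro w ⟨hwU, z, hz, hadjzw⟩
      by_cases hwA : w ∈ A
      · exact Or.inl hwA
      have hwB : w ∈ B := by
        rcases (by rw [hUn]; trivial : w ∈ A ∪ B) with h | h
        · exact (hwA h).elim
        · exact h
      rcases hpart w with h | h | h | h
      · exact (hwU ⟨hwB, h⟩).elim
      · exact (hwA (by rw [hdsub h]; exact hyA)).elim
      · exact (hwA (h ▸ hs1A)).elim
      · exact Or.inr h
    · intro hcov
      apply two_le_pair hys1.symm (a := s1) (b := y)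
      · refine ⟨hs1A, ?_⟩
        have : s1 ∈ (B ∩ c) ∪ NS G (B ∩ c) := by rw [hcov]; trivial
        rcases this with h | h
        · exact (hs1c h.2).elim
        · exact h
      · refine ⟨hyA, ?_⟩
        have : y ∈ (B ∩ c) ∪ NS G (B ∩ c) := by rw [hcov]; trivial
        rcases this with h | h
        · exact (hAB y hyA h.1).elim
        · exact h

/-- |S|=2 split, cross edge: x ∈ A∩c, y ∈ B∩d. -/
lemma caseS2cross (G : SimpleGraph V) (hK : KConnected 3 G) (A B c d : Set V)
    (s1 s2 x y : V)
    (hUn : A ∪ B = Set.univ) (hdisj : A ∩ B = ∅)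
    (hcut : (sepEdges G A B).ncard = 3)
    (hcd : c ∩ d = ∅)
    (hpart : ∀ v : V, v ∈ c ∨ v ∈ d ∨ v = s1 ∨ v = s2)
    (hs1c : s1 ∉ c) (hs1d : s1 ∉ d) (hs2c : s2 ∉ c) (hs2d : s2 ∉ d) (hs12 : s1 ≠ s2)
    (hxc : x ∈ c) (hyd : y ∈ d)
    (hchar : ∀ u ∈ c, ∀ v ∈ d, G.Adj u v → u = x ∧ v = y)
    (hc2 : 2 ≤ c.ncard) (hd2 : 2 ≤ d.ncard)
    (hdeg1d : 2 ≤ (G.neighborSet s1 ∩ (d ∪ {s1, s2})).ncard)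
    (hs1A : s1 ∈ A) (hs2B : s2 ∈ B) (hxA : x ∈ A) (hyB : y ∈ B) : False := by
  have hAB : ∀ v, v ∈ A → v ∈ B → False := by
    intro v ha hb; have hv : v ∈ A ∩ B := ⟨ha, hb⟩; rw [hdisj] at hv; exact hv
  have hmemB : ∀ v : V, v ∉ A → v ∈ B := by
    intro v hv
    rcases (by rw [hUn]; trivial : v ∈ A ∪ B) with h | h
    · exact (hv h).elim
    · exact h
  have hcdf : ∀ v, v ∈ c → v ∈ d → False := by
    intro v h1 h2; have : v ∈ c ∩ d := ⟨h1, h2⟩; rw [hcd] at this; exact this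
  have hdcov : ∀ (v : V), v ∈ d → v ∈ NS G (A ∩ c) → v = y := by
    rintro v hv ⟨-, z, hz, hadj⟩
    exact (hchar z hz.2 v hv hadj).2
  rcases Set.eq_empty_or_nonempty (A ∩ d) with hAd | hAd
  · refine four_le_three G {s1} (A ∩ c) hdisj (Set.singleton_subset_iff.2 hs1A)
      Set.inter_subset_left
      (dd fun v h1 h2 => hs1c (by rw [Set.mem_singleton_iff] at h1; rw [h1] at h2; exact h2.2))
      hcut ?_ ?_
    · apply ns_singleton G hdeg1d
      intro v hadj hvZ
      rcases hvZ with h | h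
      · apply hmemB; intro hvA
        have : v ∈ A ∩ d := ⟨hvA, h⟩
        rw [hAd] at this; exact this
      · rcases h with h | h
        · exact ((G.ne_of_adj hadj) h.symm).elim
        · exact h ▸ hs2B
    · apply corner_two G hK (U := A ∩ c) (t := s1) ⟨x, hxA, hxc⟩
      · rintro w ⟨hwU, z, hz, hadjzw⟩
        by_cases hwB : w ∈ B
        · exact Or.inl hwB
        have hwA : w ∈ A := by by_contra h; exact hwB (hmemB w h)
        rcases hpart w with h | h | h | h
        · exact (hwU ⟨hwA, h⟩).elim
        · exfalso; have : w ∈ A ∩ d := ⟨hwA, h⟩; rw [hAd] at this; exact this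
        · exact Or.inr h
        · exact (hwB (h ▸ hs2B)).elim
      · intro hcov
        exfalso
        have hdy : d ⊆ {y} := by
          intro v hv
          have : v ∈ (A ∩ c) ∪ NS G (A ∩ c) := by rw [hcov]; trivial
          rcases this with h | h
          · exact (hcdf v h.2 hv).elim
          · exact hdcov v hv h
        have := Set.ncard_le_ncard hdy (Set.toFinite _)
        rw [Set.ncard_singleton] at this; omega
  · refine four_le_three G (A ∩ c) (A ∩ d) hdisj Set.inter_subset_left
      Set.inter_subset_left (dd fun v h1 h2 => hcdf v h1.2 h2.2) hcut ?_ ?_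
    · apply corner_two G hK (U := A ∩ c) (t := s1) ⟨x, hxA, hxc⟩
      · rintro w ⟨hwU, z, hz, hadjzw⟩
        by_cases hwB : w ∈ B
        · exact Or.inl hwB
        have hwA : w ∈ A := by by_contra h; exact hwB (hmemB w h)
        rcases hpart w with h | h | h | h
        · exact (hwU ⟨hwA, h⟩).elim
        · exact (hwB ((hchar z hz.2 w h hadjzw).2 ▸ hyB)).elim
        · exact Or.inr h
        · exact (hwB (h ▸ hs2B)).elim
      · intro hcov
        exfalso
        have hdy : d ⊆ {y} := by
          intro v hv
          have : v ∈ (A ∩ c) ∪ NS G (A ∩ c) := by rw [hcov]; trivial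
          rcases this with h | h
          · exact (hcdf v h.2 hv).elim
          · exact hdcov v hv h
        have := Set.ncard_le_ncard hdy (Set.toFinite _)
        rw [Set.ncard_singleton] at this; omega
    · apply corner_two G hK hAd (t := s1)
      · rintro w ⟨hwU, z, hz, hadjzw⟩
        by_cases hwB : w ∈ B
        · exact Or.inl hwB
        have hwA : w ∈ A := by by_contra h; exact hwB (hmemB w h)
        rcases hpart w with h | h | h | h
        · exfalso
          have := hchar w h z hz.2 hadjzw.symm
          exact hAB z hz.1 (this.2 ▸ hyB)
        · exact (hwU ⟨hwA, h⟩).elim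
        · exact Or.inr h
        · exact (hwB (h ▸ hs2B)).elim
      · intro hcov
        exfalso
        have hcx : c ⊆ {x} := by
          intro v hv
          have : v ∈ (A ∩ d) ∪ NS G (A ∩ d) := by rw [hcov]; trivial
          rcases this with h | h
          · exact (hcdf v hv h.2).elim
          · obtain ⟨-, z, hz, hadj⟩ := h
            exact Set.mem_singleton_iff.2 (hchar v hv z hz.2 hadj.symm).1
        have := Set.ncard_le_ncard hcx (Set.toFinite _)
        rw [Set.ncard_singleton] at this; omega

/-- |S|=2 split, f ⊆ A, subcase B∩c = ∅. -/
lemma caseS2mainAux (G : SimpleGraph V) (hK : KConnected 3 G) (A B c d : Set V)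
    (s1 s2 x y : V)
    (hUn : A ∪ B = Set.univ) (hdisj : A ∩ B = ∅)
    (hcut : (sepEdges G A B).ncard = 3) (hB2 : 2 ≤ B.ncard)
    (hcd : c ∩ d = ∅)
    (hpart : ∀ v : V, v ∈ c ∨ v ∈ d ∨ v = s1 ∨ v = s2)
    (hs1c : s1 ∉ c) (hs1d : s1 ∉ d) (hs2c : s2 ∉ c) (hs2d : s2 ∉ d) (hs12 : s1 ≠ s2)
    (hxc : x ∈ c) (hyd : y ∈ d)
    (hchar : ∀ u ∈ c, ∀ v ∈ d, G.Adj u v → u = x ∧ v = y)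
    (hdeg2c : 2 ≤ (G.neighborSet s2 ∩ (c ∪ {s1, s2})).ncard)
    (hs1A : s1 ∈ A) (hs2B : s2 ∈ B) (hxA : x ∈ A) (hyA : y ∈ A)
    (hBc : B ∩ c = ∅) : False := by
  have hAB : ∀ v, v ∈ A → v ∈ B → False := by
    intro v ha hb; have hv : v ∈ A ∩ B := ⟨ha, hb⟩; rw [hdisj] at hv; exact hv
  have hmemA : ∀ v : V, v ∉ B → v ∈ A := by
    intro v hv
    rcases (by rw [hUn]; trivial : v ∈ A ∪ B) with h | h
    · exact h
    · exact (hv h).elim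
  have hcdf : ∀ v, v ∈ c → v ∈ d → False := by
    intro v h1 h2; have : v ∈ c ∩ d := ⟨h1, h2⟩; rw [hcd] at this; exact this
  have hUn' : B ∪ A = Set.univ := by rw [Set.union_comm]; exact hUn
  have hdisj' : B ∩ A = ∅ := by rw [Set.inter_comm]; exact hdisj
  have hcut' : (sepEdges G B A).ncard = 3 := by rw [← sepEdges_comm]; exact hcut
  have hBd : (B ∩ d).Nonempty := by
    obtain ⟨b, hb, hbs⟩ : ∃ b ∈ B, b ≠ s2 := by
      by_contra h
      push_neg at h
      have hsub : B ⊆ {s2} := fun v hv => h v hv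
      have := Set.ncard_le_ncard hsub (Set.toFinite _)
      rw [Set.ncard_singleton] at this; omega
    refine ⟨b, hb, ?_⟩
    rcases hpart b with h | h | h | h
    · exfalso; have : b ∈ B ∩ c := ⟨hb, h⟩; rw [hBc] at this; exact this
    · exact h
    · exact (hAB b (h ▸ hs1A) hb).elim
    · exact (hbs h).elim
  refine four_le_three G {s2} (B ∩ d) hdisj' (Set.singleton_subset_iff.2 hs2B)
    Set.inter_subset_left
    (dd fun v h1 h2 => hs2d (by rw [Set.mem_singleton_iff] at h1; rw [h1] at h2; exact h2.2))
    hcut' ?_ ?_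
  · apply ns_singleton G hdeg2c
    intro v hadj hvZ
    rcases hvZ with h | h
    · apply hmemA; intro hvB
      have : v ∈ B ∩ c := ⟨hvB, h⟩
      rw [hBc] at this; exact this
    · rcases h with h | h
      · exact h ▸ hs1A
      · exact ((G.ne_of_adj hadj) h.symm).elim
  · apply corner_two G hK hBd (t := s2)
    · rintro w ⟨hwU, z, hz, hadjzw⟩
      by_cases hwA : w ∈ A
      · exact Or.inl hwA
      have hwB : w ∈ B := by
        rcases (by rw [hUn]; trivial : w ∈ A ∪ B) with h | h
        · exact (hwA h).elim
        · exact h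
      rcases hpart w with h | h | h | h
      · exfalso; have : w ∈ B ∩ c := ⟨hwB, h⟩; rw [hBc] at this; exact this
      · exact (hwU ⟨hwB, h⟩).elim
      · exact (hwA (h ▸ hs1A)).elim
      · exact Or.inr h
    · intro hcov
      exfalso
      have : x ∈ (B ∩ d) ∪ NS G (B ∩ d) := by rw [hcov]; trivial
      rcases this with h | ⟨-, z, hz, hadj⟩
      · exact hcdf x hxc h.2
      · have := hchar x hxc z hz.2 hadj.symm
        exact hAB z (this.2 ▸ hyA) hz.1

/-- |S|=2 split, f ⊆ A : x ∈ A∩c, y ∈ A∩d. -/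
lemma caseS2main (G : SimpleGraph V) (hK : KConnected 3 G) (A B c d : Set V)
    (s1 s2 x y : V)
    (hUn : A ∪ B = Set.univ) (hdisj : A ∩ B = ∅)
    (hcut : (sepEdges G A B).ncard = 3) (hB2 : 2 ≤ B.ncard)
    (hcd : c ∩ d = ∅)
    (hpart : ∀ v : V, v ∈ c ∨ v ∈ d ∨ v = s1 ∨ v = s2)
    (hs1c : s1 ∉ c) (hs1d : s1 ∉ d) (hs2c : s2 ∉ c) (hs2d : s2 ∉ d) (hs12 : s1 ≠ s2)
    (hxc : x ∈ c) (hyd : y ∈ d)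
    (hchar : ∀ u ∈ c, ∀ v ∈ d, G.Adj u v → u = x ∧ v = y)
    (hdeg2c : 2 ≤ (G.neighborSet s2 ∩ (c ∪ {s1, s2})).ncard)
    (hdeg2d : 2 ≤ (G.neighborSet s2 ∩ (d ∪ {s1, s2})).ncard)
    (hs1A : s1 ∈ A) (hs2B : s2 ∈ B) (hxA : x ∈ A) (hyA : y ∈ A) : False := by
  have hAB : ∀ v, v ∈ A → v ∈ B → False := by
    intro v ha hb; have hv : v ∈ A ∩ B := ⟨ha, hb⟩; rw [hdisj] at hv; exact hv
  have hcdf : ∀ v, v ∈ c → v ∈ d → False := by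
    intro v h1 h2; have : v ∈ c ∩ d := ⟨h1, h2⟩; rw [hcd] at this; exact this
  rcases Set.eq_empty_or_nonempty (B ∩ c) with hBc | hBc
  · exact caseS2mainAux G hK A B c d s1 s2 x y hUn hdisj hcut hB2 hcd hpart
      hs1c hs1d hs2c hs2d hs12 hxc hyd hchar hdeg2c hs1A hs2B hxA hyA hBc
  rcases Set.eq_empty_or_nonempty (B ∩ d) with hBd | hBd
  · refine caseS2mainAux G hK A B d c s1 s2 y x hUn hdisj hcut hB2
      (by rw [Set.inter_comm]; exact hcd) ?_ hs1d hs1c hs2d hs2c hs12 hyd hxc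
      (fun u hu v hv hadj => by
        have := hchar v hv u hu hadj.symm
        exact ⟨this.2, this.1⟩) hdeg2d hs1A hs2B hyA hxA hBd
    intro v; rcases hpart v with h | h | h | h
    exacts [Or.inr (Or.inl h), Or.inl h, Or.inr (Or.inr (Or.inl h)),
      Or.inr (Or.inr (Or.inr h))]
  · have hUn' : B ∪ A = Set.univ := by rw [Set.union_comm]; exact hUn
    have hdisj' : B ∩ A = ∅ := by rw [Set.inter_comm]; exact hdisj
    have hcut' : (sepEdges G B A).ncard = 3 := by rw [← sepEdges_comm]; exact hcut
    refine four_le_three G (B ∩ c) (B ∩ d) hdisj' Set.inter_subset_left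
      Set.inter_subset_left (dd fun v h1 h2 => hcdf v h1.2 h2.2) hcut' ?_ ?_
    · apply corner_two G hK hBc (t := s2)
      · rintro w ⟨hwU, z, hz, hadjzw⟩
        by_cases hwA : w ∈ A
        · exact Or.inl hwA
        have hwB : w ∈ B := by
          rcases (by rw [hUn]; trivial : w ∈ A ∪ B) with h | h
          · exact (hwA h).elim
          · exact h
        rcases hpart w with h | h | h | h
        · exact (hwU ⟨hwB, h⟩).elim
        · exfalso
          have := hchar z hz.2 w h hadjzw
          exact hAB z (this.1 ▸ hxA) hz.1
        · exact (hwA (h ▸ hs1A)).elim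
        · exact Or.inr h
      · intro hcov
        exfalso
        have : y ∈ (B ∩ c) ∪ NS G (B ∩ c) := by rw [hcov]; trivial
        rcases this with h | ⟨-, z, hz, hadj⟩
        · exact hcdf y h.2 hyd
        · have := hchar z hz.2 y hyd hadj
          exact hAB z (this.1 ▸ hxA) hz.1
    · apply corner_two G hK hBd (t := s2)
      · rintro w ⟨hwU, z, hz, hadjzw⟩
        by_cases hwA : w ∈ A
        · exact Or.inl hwA
        have hwB : w ∈ B := by
          rcases (by rw [hUn]; trivial : w ∈ A ∪ B) with h | h
          · exact (hwA h).elim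
          · exact h
        rcases hpart w with h | h | h | h
        · exfalso
          have := hchar w h z hz.2 hadjzw.symm
          exact hAB z (this.2 ▸ hyA) hz.1
        · exact (hwU ⟨hwB, h⟩).elim
        · exact (hwA (h ▸ hs1A)).elim
        · exact Or.inr h
      · intro hcov
        exfalso
        have : x ∈ (B ∩ d) ∪ NS G (B ∩ d) := by rw [hcov]; trivial
        rcases this with h | ⟨-, z, hz, hadj⟩
        · exact hcdf x hxc h.2
        · have := hchar x hxc z hz.2 hadj.symm
          exact hAB z (this.2 ▸ hyA) hz.1

/-- |S|=1, case f2 ⊆ A (B-side count). -/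
lemma caseS1fA (G : SimpleGraph V) (hK : KConnected 3 G) (A B c d : Set V)
    (s x1 y1 x2 y2 : V)
    (hUn : A ∪ B = Set.univ) (hdisj : A ∩ B = ∅)
    (hcut : (sepEdges G A B).ncard = 3)
    (hcd : c ∩ d = ∅)
    (hpart : ∀ v : V, v ∈ c ∨ v ∈ d ∨ v = s)
    (hsc : s ∉ c) (hsd : s ∉ d)
    (hx1c : x1 ∈ c) (hy1d : y1 ∈ d) (hx2c : x2 ∈ c) (hy2d : y2 ∈ d)
    (hchar : ∀ u ∈ c, ∀ v ∈ d, G.Adj u v → (u = x1 ∧ v = y1) ∨ (u = x2 ∧ v = y2))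
    (hc2 : 2 ≤ c.ncard) (hd2 : 2 ≤ d.ncard)
    (hsA : s ∈ A) (hx1B : x1 ∈ B) (hy1B : y1 ∈ B) (hx2A : x2 ∈ A) (hy2A : y2 ∈ A) :
    False := by
  have hAB : ∀ v, v ∈ A → v ∈ B → False := by
    intro v ha hb; have hv : v ∈ A ∩ B := ⟨ha, hb⟩; rw [hdisj] at hv; exact hv
  have hcdf : ∀ v, v ∈ c → v ∈ d → False := by
    intro v h1 h2; have : v ∈ c ∩ d := ⟨h1, h2⟩; rw [hcd] at this; exact this
  have hUn' : B ∪ A = Set.univ := by rw [Set.union_comm]; exact hUn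
  have hdisj' : B ∩ A = ∅ := by rw [Set.inter_comm]; exact hdisj
  have hcut' : (sepEdges G B A).ncard = 3 := by rw [← sepEdges_comm]; exact hcut
  refine four_le_three G (B ∩ c) (B ∩ d) hdisj' Set.inter_subset_left
    Set.inter_subset_left (dd fun v h1 h2 => hcdf v h1.2 h2.2) hcut' ?_ ?_
  · apply corner_two G hK (U := B ∩ c) (t := y1) ⟨x1, hx1B, hx1c⟩
    · rintro w ⟨hwU, z, hz, hadjzw⟩
      by_cases hwA : w ∈ A
      · exact Or.inl hwA
      have hwB : w ∈ B := by
        rcases (by rw [hUn]; trivial : w ∈ A ∪ B) with h | h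
        · exact (hwA h).elim
        · exact h
      rcases hpart w with h | h | h
      · exact (hwU ⟨hwB, h⟩).elim
      · rcases hchar z hz.2 w h hadjzw with ⟨h1, h2⟩ | ⟨h1, h2⟩
        · exact Or.inr h2
        · exact (hAB z (h1 ▸ hx2A) hz.1).elim
      · exact (hwA (h ▸ hsA)).elim
    · intro hcov
      exfalso
      have hdy : d ⊆ {y1} := by
        intro v hv
        have : v ∈ (B ∩ c) ∪ NS G (B ∩ c) := by rw [hcov]; trivial
        rcases this with h | ⟨-, z, hz, hadj⟩
        · exact (hcdf v h.2 hv).elim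
        · rcases hchar z hz.2 v hv hadj with ⟨h1, h2⟩ | ⟨h1, h2⟩
          · exact h2 ▸ rfl
          · exact (hAB z (h1 ▸ hx2A) hz.1).elim
      have := Set.ncard_le_ncard hdy (Set.toFinite _)
      rw [Set.ncard_singleton] at this; omega
  · apply corner_two G hK (U := B ∩ d) (t := x1) ⟨y1, hy1B, hy1d⟩
    · rintro w ⟨hwU, z, hz, hadjzw⟩
      by_cases hwA : w ∈ A
      · exact Or.inl hwA
      have hwB : w ∈ B := by
        rcases (by rw [hUn]; trivial : w ∈ A ∪ B) with h | h
        · exact (hwA h).elim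
        · exact h
      rcases hpart w with h | h | h
      · rcases hchar w h z hz.2 hadjzw.symm with ⟨h1, h2⟩ | ⟨h1, h2⟩
        · exact Or.inr h1
        · exact (hAB z (h2 ▸ hy2A) hz.1).elim
      · exact (hwU ⟨hwB, h⟩).elim
      · exact (hwA (h ▸ hsA)).elim
    · intro hcov
      exfalso
      have hcx : c ⊆ {x1} := by
        intro v hv
        have : v ∈ (B ∩ d) ∪ NS G (B ∩ d) := by rw [hcov]; trivial
        rcases this with h | ⟨-, z, hz, hadj⟩
        · exact (hcdf v hv h.2).elim
        · rcases hchar v hv z hz.2 hadj.symm with ⟨h1, h2⟩ | ⟨h1, h2⟩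
          · exact h1 ▸ rfl
          · exact (hAB z (h2 ▸ hy2A) hz.1).elim
      have := Set.ncard_le_ncard hcx (Set.toFinite _)
      rw [Set.ncard_singleton] at this; omega

/-- |S|=1, case A ∩ d = ∅ (A-side count). -/
lemma caseS1beta (G : SimpleGraph V) (hK : KConnected 3 G) (A B c d : Set V)
    (s x1 y1 x2 y2 : V)
    (hUn : A ∪ B = Set.univ) (hdisj : A ∩ B = ∅)
    (hcut : (sepEdges G A B).ncard = 3) (hA2 : 2 ≤ A.ncard)
    (hcd : c ∩ d = ∅)
    (hpart : ∀ v : V, v ∈ c ∨ v ∈ d ∨ v = s)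
    (hsc : s ∉ c) (hsd : s ∉ d)
    (hx1c : x1 ∈ c) (hy1d : y1 ∈ d) (hx2c : x2 ∈ c) (hy2d : y2 ∈ d)
    (hchar : ∀ u ∈ c, ∀ v ∈ d, G.Adj u v → (u = x1 ∧ v = y1) ∨ (u = x2 ∧ v = y2))
    (hd2 : 2 ≤ d.ncard)
    (hdegd : 2 ≤ (G.neighborSet s ∩ (d ∪ {s})).ncard)
    (hsA : s ∈ A) (hx1B : x1 ∈ B)
    (hAd : A ∩ d = ∅) : False := by
  have hAB : ∀ v, v ∈ A → v ∈ B → False := by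
    intro v ha hb; have hv : v ∈ A ∩ B := ⟨ha, hb⟩; rw [hdisj] at hv; exact hv
  have hmemB : ∀ v : V, v ∉ A → v ∈ B := by
    intro v hv
    rcases (by rw [hUn]; trivial : v ∈ A ∪ B) with h | h
    · exact (hv h).elim
    · exact h
  have hcdf : ∀ v, v ∈ c → v ∈ d → False := by
    intro v h1 h2; have : v ∈ c ∩ d := ⟨h1, h2⟩; rw [hcd] at this; exact this
  have hAc : (A ∩ c).Nonempty := by
    obtain ⟨a, ha, has⟩ : ∃ a ∈ A, a ≠ s := by
      by_contra h
      push_neg at h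
      have hsub : A ⊆ {s} := fun v hv => h v hv
      have := Set.ncard_le_ncard hsub (Set.toFinite _)
      rw [Set.ncard_singleton] at this; omega
    refine ⟨a, ha, ?_⟩
    rcases hpart a with h | h | h
    · exact h
    · exfalso; have : a ∈ A ∩ d := ⟨ha, h⟩; rw [hAd] at this; exact this
    · exact (has h).elim
  refine four_le_three G {s} (A ∩ c) hdisj (Set.singleton_subset_iff.2 hsA)
    Set.inter_subset_left
    (dd fun v h1 h2 => hsc (by rw [Set.mem_singleton_iff] at h1; rw [h1] at h2; exact h2.2))
    hcut ?_ ?_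
  · apply ns_singleton G hdegd
    intro v hadj hvZ
    rcases hvZ with h | h
    · apply hmemB; intro hvA
      have : v ∈ A ∩ d := ⟨hvA, h⟩
      rw [hAd] at this; exact this
    · exact ((G.ne_of_adj hadj) (Set.mem_singleton_iff.1 h).symm).elim
  · apply corner_two G hK hAc (t := s)
    · rintro w ⟨hwU, z, hz, hadjzw⟩
      by_cases hwB : w ∈ B
      · exact Or.inl hwB
      have hwA : w ∈ A := by by_contra h; exact hwB (hmemB w h)
      rcases hpart w with h | h | h
      · exact (hwU ⟨hwA, h⟩).elim
      · exfalso; have : w ∈ A ∩ d := ⟨hwA, h⟩; rw [hAd] at this; exact this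
      · exact Or.inr h
    · intro hcov
      exfalso
      have hdy : d ⊆ {y2} := by
        intro v hv
        have : v ∈ (A ∩ c) ∪ NS G (A ∩ c) := by rw [hcov]; trivial
        rcases this with h | ⟨-, z, hz, hadj⟩
        · exact (hcdf v h.2 hv).elim
        · rcases hchar z hz.2 v hv hadj with ⟨h1, h2⟩ | ⟨h1, h2⟩
          · exact (hAB z hz.1 (h1 ▸ hx1B)).elim
          · exact h2 ▸ rfl
      have := Set.ncard_le_ncard hdy (Set.toFinite _)
      rw [Set.ncard_singleton] at this; omega

/-- |S|=1, case both corners of A nonempty, f2 not inside A. -/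
lemma caseS1alpha (G : SimpleGraph V) (hK : KConnected 3 G) (A B c d : Set V)
    (s x1 y1 x2 y2 : V)
    (hUn : A ∪ B = Set.univ) (hdisj : A ∩ B = ∅)
    (hcut : (sepEdges G A B).ncard = 3)
    (hcd : c ∩ d = ∅)
    (hpart : ∀ v : V, v ∈ c ∨ v ∈ d ∨ v = s)
    (hsc : s ∉ c) (hsd : s ∉ d)
    (hx1c : x1 ∈ c) (hy1d : y1 ∈ d) (hx2c : x2 ∈ c) (hy2d : y2 ∈ d)
    (hchar : ∀ u ∈ c, ∀ v ∈ d, G.Adj u v → (u = x1 ∧ v = y1) ∨ (u = x2 ∧ v = y2))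
    (hc2 : 2 ≤ c.ncard) (hd2 : 2 ≤ d.ncard)
    (hsA : s ∈ A) (hx1B : x1 ∈ B) (hy1B : y1 ∈ B)
    (hnotA : ¬(x2 ∈ A ∧ y2 ∈ A))
    (hAc : (A ∩ c).Nonempty) (hAd : (A ∩ d).Nonempty) : False := by
  have hAB : ∀ v, v ∈ A → v ∈ B → False := by
    intro v ha hb; have hv : v ∈ A ∩ B := ⟨ha, hb⟩; rw [hdisj] at hv; exact hv
  have hmemB : ∀ v : V, v ∉ A → v ∈ B := by
    intro v hv
    rcases (by rw [hUn]; trivial : v ∈ A ∪ B) with h | h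
    · exact (hv h).elim
    · exact h
  have hcdf : ∀ v, v ∈ c → v ∈ d → False := by
    intro v h1 h2; have : v ∈ c ∩ d := ⟨h1, h2⟩; rw [hcd] at this; exact this
  refine four_le_three G (A ∩ c) (A ∩ d) hdisj Set.inter_subset_left
    Set.inter_subset_left (dd fun v h1 h2 => hcdf v h1.2 h2.2) hcut ?_ ?_
  · apply corner_two G hK hAc (t := s)
    · rintro w ⟨hwU, z, hz, hadjzw⟩
      by_cases hwB : w ∈ B
      · exact Or.inl hwB
      have hwA : w ∈ A := by by_contra h; exact hwB (hmemB w h)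
      rcases hpart w with h | h | h
      · exact (hwU ⟨hwA, h⟩).elim
      · rcases hchar z hz.2 w h hadjzw with ⟨h1, h2⟩ | ⟨h1, h2⟩
        · exact (hAB z hz.1 (h1 ▸ hx1B)).elim
        · exact (hnotA ⟨h1 ▸ hz.1, h2 ▸ hwA⟩).elim
      · exact Or.inr h
    · intro hcov
      exfalso
      have hdy : d ⊆ {y2} := by
        intro v hv
        have : v ∈ (A ∩ c) ∪ NS G (A ∩ c) := by rw [hcov]; trivial
        rcases this with h | ⟨-, z, hz, hadj⟩
        · exact (hcdf v h.2 hv).elim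
        · rcases hchar z hz.2 v hv hadj with ⟨h1, h2⟩ | ⟨h1, h2⟩
          · exact (hAB z hz.1 (h1 ▸ hx1B)).elim
          · exact h2 ▸ rfl
      have := Set.ncard_le_ncard hdy (Set.toFinite _)
      rw [Set.ncard_singleton] at this; omega
  · apply corner_two G hK hAd (t := s)
    · rintro w ⟨hwU, z, hz, hadjzw⟩
      by_cases hwB : w ∈ B
      · exact Or.inl hwB
      have hwA : w ∈ A := by by_contra h; exact hwB (hmemB w h)
      rcases hpart w with h | h | h
      · rcases hchar w h z hz.2 hadjzw.symm with ⟨h1, h2⟩ | ⟨h1, h2⟩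
        · exact (hAB z hz.1 (h2 ▸ hy1B)).elim
        · exact (hnotA ⟨h1 ▸ hwA, h2 ▸ hz.1⟩).elim
      · exact (hwU ⟨hwA, h⟩).elim
      · exact Or.inr h
    · intro hcov
      exfalso
      have hcx : c ⊆ {x2} := by
        intro v hv
        have : v ∈ (A ∩ d) ∪ NS G (A ∩ d) := by rw [hcov]; trivial
        rcases this with h | ⟨-, z, hz, hadj⟩
        · exact (hcdf v hv h.2).elim
        · rcases hchar v hv z hz.2 hadj.symm with ⟨h1, h2⟩ | ⟨h1, h2⟩
          · exact (hAB z hz.1 (h2 ▸ hy1B)).elim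
          · exact h1 ▸ rfl
      have := Set.ncard_le_ncard hcx (Set.toFinite _)
      rw [Set.ncard_singleton] at this; omega

/-- |S|=1 core: s ∈ A, first pair inside B. -/
lemma caseS1core (G : SimpleGraph V) (hK : KConnected 3 G) (A B c d : Set V)
    (s x1 y1 x2 y2 : V)
    (hUn : A ∪ B = Set.univ) (hdisj : A ∩ B = ∅)
    (hcut : (sepEdges G A B).ncard = 3) (hA2 : 2 ≤ A.ncard)
    (hcd : c ∩ d = ∅)
    (hpart : ∀ v : V, v ∈ c ∨ v ∈ d ∨ v = s)
    (hsc : s ∉ c) (hsd : s ∉ d)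
    (hx1c : x1 ∈ c) (hy1d : y1 ∈ d) (hx2c : x2 ∈ c) (hy2d : y2 ∈ d)
    (hchar : ∀ u ∈ c, ∀ v ∈ d, G.Adj u v → (u = x1 ∧ v = y1) ∨ (u = x2 ∧ v = y2))
    (hdegc : 2 ≤ (G.neighborSet s ∩ (c ∪ {s})).ncard)
    (hdegd : 2 ≤ (G.neighborSet s ∩ (d ∪ {s})).ncard)
    (hc2 : 2 ≤ c.ncard) (hd2 : 2 ≤ d.ncard)
    (hsA : s ∈ A) (hx1B : x1 ∈ B) (hy1B : y1 ∈ B) : False := by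
  have hmemB : ∀ v : V, v ∉ A → v ∈ B := by
    intro v hv
    rcases (by rw [hUn]; trivial : v ∈ A ∪ B) with h | h
    · exact (hv h).elim
    · exact h
  by_cases hf2 : x2 ∈ A ∧ y2 ∈ A
  · exact caseS1fA G hK A B c d s x1 y1 x2 y2 hUn hdisj hcut hcd hpart hsc hsd
      hx1c hy1d hx2c hy2d hchar hc2 hd2 hsA hx1B hy1B hf2.1 hf2.2
  rcases Set.eq_empty_or_nonempty (A ∩ d) with hAd | hAd
  · exact caseS1beta G hK A B c d s x1 y1 x2 y2 hUn hdisj hcut hA2 hcd hpart hsc hsd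
      hx1c hy1d hx2c hy2d hchar hd2 hdegd hsA hx1B hAd
  rcases Set.eq_empty_or_nonempty (A ∩ c) with hAc | hAc
  · refine caseS1beta G hK A B d c s y1 x1 y2 x2 hUn hdisj hcut hA2
      (by rw [Set.inter_comm]; exact hcd) ?_ hsd hsc hy1d hx1c hy2d hx2c
      (fun u hu v hv hadj => by
        rcases hchar v hv u hu hadj.symm with ⟨h1, h2⟩ | ⟨h1, h2⟩
        · exact Or.inl ⟨h2, h1⟩
        · exact Or.inr ⟨h2, h1⟩) hc2 hdegc hsA hy1B hAc
    intro v; rcases hpart v with h | h | h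
    exacts [Or.inr (Or.inl h), Or.inl h, Or.inr (Or.inr h)]
  · exact caseS1alpha G hK A B c d s x1 y1 x2 y2 hUn hdisj hcut hcd hpart hsc hsd
      hx1c hy1d hx2c hy2d hchar hc2 hd2 hsA hx1B hy1B hf2 hAc hAd

/-- |S|=1 dispatcher given the side of `s` (named `A`). -/
lemma caseS1pre (G : SimpleGraph V) (hK : KConnected 3 G) (A B c d : Set V)
    (s x1 y1 x2 y2 : V)
    (hUn : A ∪ B = Set.univ) (hdisj : A ∩ B = ∅)
    (hcut : (sepEdges G A B).ncard = 3) (hA2 : 2 ≤ A.ncard)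
    (hcd : c ∩ d = ∅)
    (hpart : ∀ v : V, v ∈ c ∨ v ∈ d ∨ v = s)
    (hsc : s ∉ c) (hsd : s ∉ d)
    (hx1c : x1 ∈ c) (hy1d : y1 ∈ d) (hx2c : x2 ∈ c) (hy2d : y2 ∈ d)
    (hchar : ∀ u ∈ c, ∀ v ∈ d, G.Adj u v → (u = x1 ∧ v = y1) ∨ (u = x2 ∧ v = y2))
    (hdegc : 2 ≤ (G.neighborSet s ∩ (c ∪ {s})).ncard)
    (hdegd : 2 ≤ (G.neighborSet s ∩ (d ∪ {s})).ncard)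
    (hc2 : 2 ≤ c.ncard) (hd2 : 2 ≤ d.ncard)
    (hsA : s ∈ A)
    (hnnBc : ¬B ⊆ c) (hnnBd : ¬B ⊆ d) : False := by
  have hAB : ∀ v, v ∈ A → v ∈ B → False := by
    intro v ha hb; have hv : v ∈ A ∩ B := ⟨ha, hb⟩; rw [hdisj] at hv; exact hv
  have hBcd : ∀ v ∈ B, v ∈ c ∨ v ∈ d := by
    intro v hv
    rcases hpart v with h | h | h
    · exact Or.inl h
    · exact Or.inr h
    · exact (hAB v (h ▸ hsA) hv).elim
  have hcdf : ∀ v, v ∈ c → v ∈ d → False := by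
    intro v h1 h2; have : v ∈ c ∩ d := ⟨h1, h2⟩; rw [hcd] at this; exact this
  by_cases hadjB : ∃ u ∈ B ∩ c, ∃ v ∈ B ∩ d, G.Adj u v
  · obtain ⟨u, hu, v, hv, hadj⟩ := hadjB
    rcases hchar u hu.2 v hv.2 hadj with ⟨h1, h2⟩ | ⟨h1, h2⟩
    · exact caseS1core G hK A B c d s x1 y1 x2 y2 hUn hdisj hcut hA2 hcd hpart hsc hsd
        hx1c hy1d hx2c hy2d hchar hdegc hdegd hc2 hd2 hsA (h1 ▸ hu.1) (h2 ▸ hv.1)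
    · exact caseS1core G hK A B c d s x2 y2 x1 y1 hUn hdisj hcut hA2 hcd hpart hsc hsd
        hx2c hy2d hx1c hy1d
        (fun u' hu' v' hv' hadj' => (hchar u' hu' v' hv' hadj').symm)
        hdegc hdegd hc2 hd2 hsA (h1 ▸ hu.1) (h2 ▸ hv.1)
  · push_neg at hadjB
    have hBc : (B ∩ c).Nonempty := by
      obtain ⟨b, hb, hbc⟩ := Set.not_subset.1 hnnBd
      rcases hBcd b hb with h | h
      · exact ⟨b, hb, h⟩
      · exact (hbc h).elim
    have hBd : (B ∩ d).Nonempty := by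
      obtain ⟨b, hb, hbc⟩ := Set.not_subset.1 hnnBc
      rcases hBcd b hb with h | h
      · exact (hbc h).elim
      · exact ⟨b, hb, h⟩
    refine locked G hK B A (B ∩ c) (B ∩ d)
      (by rw [Set.union_comm]; exact hUn) (by rw [Set.inter_comm]; exact hdisj)
      (by rw [← sepEdges_comm]; exact hcut)
      Set.inter_subset_left Set.inter_subset_left
      (dd fun v h1 h2 => hcdf v h1.2 h2.2) ?_ hBc hBd
      (fun u hu v hv => hadjB u hu v hv)
    intro v hv
    rcases hBcd v hv with h | h
    · exact Or.inl ⟨hv, h⟩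
    · exact Or.inr ⟨hv, h⟩

/-- |S|=2 split dispatcher: s1 ∈ A, s2 ∈ B. -/
lemma caseS2split (G : SimpleGraph V) (hK : KConnected 3 G) (A B c d : Set V)
    (s1 s2 x y : V)
    (hUn : A ∪ B = Set.univ) (hdisj : A ∩ B = ∅)
    (hcut : (sepEdges G A B).ncard = 3) (hA2 : 2 ≤ A.ncard) (hB2 : 2 ≤ B.ncard)
    (hcd : c ∩ d = ∅) (hc : c.Nonempty) (hd : d.Nonempty)
    (hpart : ∀ v : V, v ∈ c ∨ v ∈ d ∨ v = s1 ∨ v = s2)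
    (hs1c : s1 ∉ c) (hs1d : s1 ∉ d) (hs2c : s2 ∉ c) (hs2d : s2 ∉ d) (hs12 : s1 ≠ s2)
    (hxc : x ∈ c) (hyd : y ∈ d)
    (hchar : ∀ u ∈ c, ∀ v ∈ d, G.Adj u v → u = x ∧ v = y)
    (hdeg1c : 2 ≤ (G.neighborSet s1 ∩ (c ∪ {s1, s2})).ncard)
    (hdeg1d : 2 ≤ (G.neighborSet s1 ∩ (d ∪ {s1, s2})).ncard)
    (hdeg2c : 2 ≤ (G.neighborSet s2 ∩ (c ∪ {s1, s2})).ncard)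
    (hdeg2d : 2 ≤ (G.neighborSet s2 ∩ (d ∪ {s1, s2})).ncard)
    (hs1A : s1 ∈ A) (hs2B : s2 ∈ B) : False := by
  have hAB : ∀ v, v ∈ A → v ∈ B → False := by
    intro v ha hb; have hv : v ∈ A ∩ B := ⟨ha, hb⟩; rw [hdisj] at hv; exact hv
  have hmemB : ∀ v : V, v ∉ A → v ∈ B := by
    intro v hv
    rcases (by rw [hUn]; trivial : v ∈ A ∪ B) with h | h
    · exact (hv h).elim
    · exact h
  have hpart' : ∀ v : V, v ∈ d ∨ v ∈ c ∨ v = s1 ∨ v = s2 := by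
    intro v; rcases hpart v with h | h | h | h
    exacts [Or.inr (Or.inl h), Or.inl h, Or.inr (Or.inr (Or.inl h)),
      Or.inr (Or.inr (Or.inr h))]
  have hpartBA : ∀ v : V, v ∈ c ∨ v ∈ d ∨ v = s2 ∨ v = s1 := by
    intro v; rcases hpart v with h | h | h | h
    exacts [Or.inl h, Or.inr (Or.inl h), Or.inr (Or.inr (Or.inr h)),
      Or.inr (Or.inr (Or.inl h))]
  have hpairc : ({s2, s1} : Set V) = {s1, s2} := Set.pair_comm s2 s1
  have hUn' : B ∪ A = Set.univ := by rw [Set.union_comm]; exact hUn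
  have hdisj' : B ∩ A = ∅ := by rw [Set.inter_comm]; exact hdisj
  have hcut' : (sepEdges G B A).ncard = 3 := by rw [← sepEdges_comm]; exact hcut
  have hcharBA : ∀ u ∈ d, ∀ v ∈ c, G.Adj u v → u = y ∧ v = x := by
    intro u hu v hv hadj
    have := hchar v hv u hu hadj.symm
    exact ⟨this.2, this.1⟩
  -- singleton d ?
  by_cases hd2 : 2 ≤ d.ncard
  · by_cases hc2 : 2 ≤ c.ncard
    · -- general case : dispatch on positions of x, y
      by_cases hxA : x ∈ A
      · by_cases hyA : y ∈ A
        · exact caseS2main G hK A B c d s1 s2 x y hUn hdisj hcut hB2 hcd hpart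
            hs1c hs1d hs2c hs2d hs12 hxc hyd hchar hdeg2c hdeg2d hs1A hs2B hxA hyA
        · exact caseS2cross G hK A B c d s1 s2 x y hUn hdisj hcut hcd hpart
            hs1c hs1d hs2c hs2d hs12 hxc hyd hchar hc2 hd2 hdeg1d hs1A hs2B hxA
            (hmemB y hyA)
      · have hxB : x ∈ B := hmemB x hxA
        by_cases hyA : y ∈ A
        · exact caseS2cross G hK B A c d s2 s1 x y hUn' hdisj' hcut' hcd hpartBA
            hs2c hs2d hs1c hs1d (fun h => hs12 h.symm) hxc hyd hchar hc2 hd2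
            (by rw [hpairc]; exact hdeg2d) hs2B hs1A hxB hyA
        · refine caseS2main G hK B A c d s2 s1 x y hUn' hdisj' hcut' hA2 hcd hpartBA
            hs2c hs2d hs1c hs1d (fun h => hs12 h.symm) hxc hyd hchar
            (by rw [hpairc]; exact hdeg1c) (by rw [hpairc]; exact hdeg1d)
            hs2B hs1A hxB (hmemB y hyA)
    · -- c singleton
      have hcx : c ⊆ {x} := by
        have h1 : c.ncard = 1 := by
          have : 1 ≤ c.ncard := by
            rw [Nat.one_le_iff_ne_zero, ← Nat.pos_iff_ne_zero]
            exact (Set.ncard_pos (Set.toFinite _)).2 hc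
          omega
        obtain ⟨x0, hx0⟩ := Set.ncard_eq_one.1 h1
        rw [hx0]
        rw [hx0] at hxc
        intro v hv
        rw [Set.mem_singleton_iff] at hv hxc ⊢
        rw [hv, hxc]
      by_cases hxA : x ∈ A
      · refine caseS2dSing G hK A B d c s1 s2 x hUn hdisj hcut hB2
          (by rw [Set.inter_comm]; exact hcd) hpart' hs1d hs1c hs2d hs2c hs12
          hxc hcx hdeg2c hs1A hs2B hxA
      · refine caseS2dSing G hK B A d c s2 s1 x hUn' hdisj' hcut' hA2
          (by rw [Set.inter_comm]; exact hcd) ?_ hs2d hs2c hs1d hs1c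
          (fun h => hs12 h.symm) hxc hcx (by rw [hpairc]; exact hdeg1c)
          hs2B hs1A (hmemB x hxA)
        intro v; rcases hpart v with h | h | h | h
        exacts [Or.inr (Or.inl h), Or.inl h, Or.inr (Or.inr (Or.inr h)),
          Or.inr (Or.inr (Or.inl h))]
  · -- d singleton
    have hdy : d ⊆ {y} := by
      have h1 : d.ncard = 1 := by
        have : 1 ≤ d.ncard := by
          rw [Nat.one_le_iff_ne_zero, ← Nat.pos_iff_ne_zero]
          exact (Set.ncard_pos (Set.toFinite _)).2 hd
        omega
      obtain ⟨y0, hy0⟩ := Set.ncard_eq_one.1 h1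
      rw [hy0]
      rw [hy0] at hyd
      intro v hv
      rw [Set.mem_singleton_iff] at hv hyd ⊢
      rw [hv, hyd]
    by_cases hyA : y ∈ A
    · exact caseS2dSing G hK A B c d s1 s2 y hUn hdisj hcut hB2 hcd hpart
        hs1c hs1d hs2c hs2d hs12 hyd hdy hdeg2d hs1A hs2B hyA
    · exact caseS2dSing G hK B A c d s2 s1 y hUn' hdisj' hcut' hA2 hcd hpartBA
        hs2c hs2d hs1c hs1d (fun h => hs12 h.symm) hyd hdy
        (by rw [hpairc]; exact hdeg1d) hs2B hs1A (hmemB y hyA)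

/-- all of the separator on one side: the other side must be inside c or d. -/
lemma lockedSide (G : SimpleGraph V) (hK : KConnected 3 G) (X Y c d : Set V)
    (hUn : X ∪ Y = Set.univ) (hdisj : X ∩ Y = ∅)
    (hcut : (sepEdges G X Y).ncard = 3) (hcd : c ∩ d = ∅)
    (hYcd : ∀ v ∈ Y, v ∈ c ∨ v ∈ d)
    (hnoadj : ∀ x ∈ c, ∀ y ∈ d, ¬G.Adj x y)
    (hnYc : ¬Y ⊆ c) (hnYd : ¬Y ⊆ d) : False := by
  have hYc : (Y ∩ c).Nonempty := by
    obtain ⟨b, hb, hbd⟩ := Set.not_subset.1 hnYd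
    rcases hYcd b hb with h | h
    · exact ⟨b, hb, h⟩
    · exact (hbd h).elim
  have hYd : (Y ∩ d).Nonempty := by
    obtain ⟨b, hb, hbc⟩ := Set.not_subset.1 hnYc
    rcases hYcd b hb with h | h
    · exact (hbc h).elim
    · exact ⟨b, hb, h⟩
  have hcdf : ∀ v, v ∈ c → v ∈ d → False := by
    intro v h1 h2; have : v ∈ c ∩ d := ⟨h1, h2⟩; rw [hcd] at this; exact this
  refine locked G hK Y X (Y ∩ c) (Y ∩ d)
    (by rw [Set.union_comm]; exact hUn) (by rw [Set.inter_comm]; exact hdisj)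
    (by rw [← sepEdges_comm]; exact hcut)
    Set.inter_subset_left Set.inter_subset_left
    (dd fun v h1 h2 => hcdf v h1.2 h2.2) ?_ hYc hYd
    (fun u hu v hv hadj => hnoadj u hu.2 v hv.2 hadj)
  intro v hv
  rcases hYcd v hv with h | h
  · exact Or.inl ⟨hv, h⟩
  · exact Or.inr ⟨hv, h⟩

lemma master (G : SimpleGraph V) (hK : KConnected 3 G) (A B C D : Set V)
    (hUn : A ∪ B = Set.univ) (hdisj : A ∩ B = ∅)
    (hA2 : 2 ≤ A.ncard) (hB2 : 2 ≤ B.ncard)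
    (hcut : (sepEdges G A B).ncard = 3)
    (hCD : TriSep G C D)
    (hnAc : ¬A ⊆ C \ D) (hnAd : ¬A ⊆ D \ C)
    (hnBc : ¬B ⊆ C \ D) (hnBd : ¬B ⊆ D \ C) : False := by
  obtain ⟨⟨⟨hCDun, hcne, hdne⟩, horder⟩, hdeg⟩ := hCD
  set c := C \ D with hc_def
  set d := D \ C with hd_def
  have hordeq : (C ∩ D).ncard + (sepEdges G C D).ncard = 3 := by
    rw [← sepOrder_decomp]; exact horder
  have hcd : c ∩ d = ∅ := dd (fun v h1 h2 => h1.2 h2.1)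
  have hcdf : ∀ v, v ∈ c → v ∈ d → False := by
    intro v h1 h2; have : v ∈ c ∩ d := ⟨h1, h2⟩; rw [hcd] at this; exact this
  have hpart : ∀ v : V, v ∈ c ∨ v ∈ d ∨ v ∈ C ∩ D := by
    intro v
    have hvC : v ∈ C ∪ D := by rw [hCDun]; trivial
    by_cases h1 : v ∈ C <;> by_cases h2 : v ∈ D
    · exact Or.inr (Or.inr ⟨h1, h2⟩)
    · exact Or.inl ⟨h1, h2⟩
    · exact Or.inr (Or.inl ⟨h2, h1⟩)
    · rcases hvC with h | h
      · exact (h1 h).elim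
      · exact (h2 h).elim
  have hSc : ∀ v ∈ C ∩ D, v ∉ c := fun v hv h => h.2 hv.2
  have hSd : ∀ v ∈ C ∩ D, v ∉ d := fun v hv h => h.2 hv.1
  have hCeq : C = c ∪ (C ∩ D) := by
    ext v
    constructor
    · intro h
      by_cases h2 : v ∈ D
      · exact Or.inr ⟨h, h2⟩
      · exact Or.inl ⟨h, h2⟩
    · rintro (h | h)
      · exact h.1
      · exact h.1
  have hDeq : D = d ∪ (C ∩ D) := by
    ext v
    constructor
    · intro h
      by_cases h2 : v ∈ C
      · exact Or.inr ⟨h2, h⟩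
      · exact Or.inl ⟨h, h2⟩
    · rintro (h | h)
      · exact h.1
      · exact h.2
  have hadjF : ∀ u ∈ c, ∀ v ∈ d, G.Adj u v → s(u, v) ∈ sepEdges G C D :=
    fun u hu v hv hadj => ⟨hadj, u, hu, v, hv, rfl⟩
  have hmemB : ∀ v : V, v ∉ A → v ∈ B := by
    intro v hv
    rcases (by rw [hUn]; trivial : v ∈ A ∪ B) with h | h
    · exact (hv h).elim
    · exact h
  have hk3 : (C ∩ D).ncard ≤ 3 := by omega
  interval_cases hSn : (C ∩ D).ncard
  · -- |S| = 0
    have hS : C ∩ D = ∅ := (Set.ncard_eq_zero (Set.toFinite _)).1 hSn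
    have hF3 : (sepEdges G C D).ncard = 3 := by omega
    have hpart0 : ∀ v : V, v ∈ c ∨ v ∈ d := by
      intro v
      rcases hpart v with h | h | h
      · exact Or.inl h
      · exact Or.inr h
      · rw [hS] at h; exact h.elim
    refine caseS0 G hK A B c d hUn hdisj ?_ ?_ hcd ?_ ?_ ?_ ?_ ?_
    · rw [← sepEdges_eq_ewSet' hdisj]; exact hcut
    · apply Set.eq_univ_of_forall
      intro v
      rcases hpart0 v with h | h
      · exact Or.inl h
      · exact Or.inr h
    · rw [← sepEdges_eq_ewSet' hcd]
      have : sepEdges G c d = sepEdges G C D := by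
        unfold sepEdges
        rw [hc_def, hd_def]
        congr 1
        ext e
        constructor
        · rintro ⟨he, x, hx, y, hy, rfl⟩
          exact ⟨he, x, hx.1, y, hy.1, rfl⟩
        · rintro ⟨he, x, hx, y, hy, rfl⟩
          exact ⟨he, ⟨x, ⟨hx, fun hh => hx.2 hh.1⟩, y, ⟨hy, fun hh => hy.2 hh.1⟩, rfl⟩⟩
      rw [this]; exact hF3
    · obtain ⟨a, ha, hna⟩ := Set.not_subset.1 hnAd
      rcases hpart0 a with h | h
      · exact ⟨a, ha, h⟩
      · exact (hna h).elim
    · obtain ⟨a, ha, hna⟩ := Set.not_subset.1 hnAc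
      rcases hpart0 a with h | h
      · exact (hna h).elim
      · exact ⟨a, ha, h⟩
    · obtain ⟨b, hb, hnb⟩ := Set.not_subset.1 hnBd
      rcases hpart0 b with h | h
      · exact ⟨b, hb, h⟩
      · exact (hnb h).elim
    · obtain ⟨b, hb, hnb⟩ := Set.not_subset.1 hnBc
      rcases hpart0 b with h | h
      · exact (hnb h).elim
      · exact ⟨b, hb, h⟩
  · -- |S| = 1
    obtain ⟨s, hS⟩ := Set.ncard_eq_one.1 hSn
    have hF2 : (sepEdges G C D).ncard = 2 := by omega
    obtain ⟨e1, e2, hee, hFeq⟩ := Set.ncard_eq_two.1 hF2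
    obtain ⟨x1, y1, hx1, hy1, hadj1, he1⟩ := sepEdges_orient (e := e1)
      (by rw [hFeq]; exact Or.inl rfl)
    obtain ⟨x2, y2, hx2, hy2, hadj2, he2⟩ := sepEdges_orient (e := e2)
      (by rw [hFeq]; exact Or.inr rfl)
    have hchar : ∀ u ∈ c, ∀ v ∈ d, G.Adj u v → (u = x1 ∧ v = y1) ∨ (u = x2 ∧ v = y2) := by
      intro u hu v hv hadj
      have hmem : s(u, v) ∈ sepEdges G C D := hadjF u hu v hv hadj
      rw [hFeq] at hmem
      rcases hmem with h | h
      · rw [he1, Sym2.eq_iff] at h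
        rcases h with ⟨ha, hb⟩ | ⟨ha, hb⟩
        · exact Or.inl ⟨ha, hb⟩
        · exact (hcdf u hu (ha ▸ hy1)).elim
      · rw [Set.mem_singleton_iff, he2, Sym2.eq_iff] at h
        rcases h with ⟨ha, hb⟩ | ⟨ha, hb⟩
        · exact Or.inr ⟨ha, hb⟩
        · exact (hcdf u hu (ha ▸ hy2)).elim
    have hsS : s ∈ C ∩ D := by rw [hS]; rfl
    have hdegs := hdeg s hsS
    have hdegc : 2 ≤ (G.neighborSet s ∩ (c ∪ {s})).ncard := by
      have : C = c ∪ {s} := by rw [hCeq, hS]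
      rw [← this]; exact hdegs.1
    have hdegd : 2 ≤ (G.neighborSet s ∩ (d ∪ {s})).ncard := by
      have : D = d ∪ {s} := by rw [hDeq, hS]
      rw [← this]; exact hdegs.2
    have hc2 : 2 ≤ c.ncard := by
      refine le_trans hdegc (Set.ncard_le_ncard ?_ (Set.toFinite _))
      rintro v ⟨hadj, hv | hv⟩
      · exact hv
      · exact ((G.ne_of_adj hadj) (Set.mem_singleton_iff.1 hv).symm).elim
    have hd2 : 2 ≤ d.ncard := by
      refine le_trans hdegd (Set.ncard_le_ncard ?_ (Set.toFinite _))
      rintro v ⟨hadj, hv | hv⟩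
      · exact hv
      · exact ((G.ne_of_adj hadj) (Set.mem_singleton_iff.1 hv).symm).elim
    have hpart1 : ∀ v : V, v ∈ c ∨ v ∈ d ∨ v = s := by
      intro v
      rcases hpart v with h | h | h
      · exact Or.inl h
      · exact Or.inr (Or.inl h)
      · rw [hS] at h; exact Or.inr (Or.inr h)
    by_cases hsA : s ∈ A
    · exact caseS1pre G hK A B c d s x1 y1 x2 y2 hUn hdisj hcut hA2 hcd hpart1
        (hSc s hsS) (hSd s hsS) hx1 hy1 hx2 hy2 hchar hdegc hdegd hc2 hd2 hsA hnBc hnBd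
    · exact caseS1pre G hK B A c d s x1 y1 x2 y2
        (by rw [Set.union_comm]; exact hUn) (by rw [Set.inter_comm]; exact hdisj)
        (by rw [← sepEdges_comm]; exact hcut) hB2 hcd hpart1
        (hSc s hsS) (hSd s hsS) hx1 hy1 hx2 hy2 hchar hdegc hdegd hc2 hd2
        (hmemB s hsA) hnAc hnAd
  · -- |S| = 2
    obtain ⟨s1, s2, hs12, hS⟩ := Set.ncard_eq_two.1 hSn
    have hF1 : (sepEdges G C D).ncard = 1 := by omega
    obtain ⟨e, hFeq⟩ := Set.ncard_eq_one.1 hF1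
    obtain ⟨x, y, hx, hy, hadj, he⟩ := sepEdges_orient (e := e)
      (by rw [hFeq]; rfl)
    have hchar : ∀ u ∈ c, ∀ v ∈ d, G.Adj u v → u = x ∧ v = y := by
      intro u hu v hv hadj'
      have hmem : s(u, v) ∈ sepEdges G C D := hadjF u hu v hv hadj'
      rw [hFeq, Set.mem_singleton_iff, he, Sym2.eq_iff] at hmem
      rcases hmem with ⟨ha, hb⟩ | ⟨ha, hb⟩
      · exact ⟨ha, hb⟩
      · exact (hcdf u hu (ha ▸ hy)).elim
    have hs1S : s1 ∈ C ∩ D := by rw [hS]; exact Or.inl rfl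
    have hs2S : s2 ∈ C ∩ D := by rw [hS]; exact Or.inr rfl
    have hdeg1 := hdeg s1 hs1S
    have hdeg2 := hdeg s2 hs2S
    have hCeq2 : C = c ∪ {s1, s2} := by rw [hCeq, hS]
    have hDeq2 : D = d ∪ {s1, s2} := by rw [hDeq, hS]
    have hdeg1c : 2 ≤ (G.neighborSet s1 ∩ (c ∪ {s1, s2})).ncard := by
      rw [← hCeq2]; exact hdeg1.1
    have hdeg1d : 2 ≤ (G.neighborSet s1 ∩ (d ∪ {s1, s2})).ncard := by
      rw [← hDeq2]; exact hdeg1.2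
    have hdeg2c : 2 ≤ (G.neighborSet s2 ∩ (c ∪ {s1, s2})).ncard := by
      rw [← hCeq2]; exact hdeg2.1
    have hdeg2d : 2 ≤ (G.neighborSet s2 ∩ (d ∪ {s1, s2})).ncard := by
      rw [← hDeq2]; exact hdeg2.2
    have hpart2 : ∀ v : V, v ∈ c ∨ v ∈ d ∨ v = s1 ∨ v = s2 := by
      intro v
      rcases hpart v with h | h | h
      · exact Or.inl h
      · exact Or.inr (Or.inl h)
      · rw [hS] at h
        rcases h with h | h
        · exact Or.inr (Or.inr (Or.inl h))
        · exact Or.inr (Or.inr (Or.inr h))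
    have hpart2' : ∀ v : V, v ∈ c ∨ v ∈ d ∨ v = s2 ∨ v = s1 := by
      intro v
      rcases hpart2 v with h | h | h | h
      exacts [Or.inl h, Or.inr (Or.inl h), Or.inr (Or.inr (Or.inr h)),
        Or.inr (Or.inr (Or.inl h))]
    have hpairc : ({s2, s1} : Set V) = {s1, s2} := Set.pair_comm s2 s1
    by_cases hs1A : s1 ∈ A <;> by_cases hs2A : s2 ∈ A
    · exact caseS2same G hK A B c d s1 s2 x y hUn hdisj hcut hcd hpart2
        (hSc s1 hs1S) (hSd s1 hs1S) (hSc s2 hs2S) (hSd s2 hs2S) hs12 hx hy hchar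
        hs1A hs2A hnBc hnBd
    · exact caseS2split G hK A B c d s1 s2 x y hUn hdisj hcut hA2 hB2 hcd hcne hdne
        hpart2 (hSc s1 hs1S) (hSd s1 hs1S) (hSc s2 hs2S) (hSd s2 hs2S) hs12 hx hy hchar
        hdeg1c hdeg1d hdeg2c hdeg2d hs1A (hmemB s2 hs2A)
    · exact caseS2split G hK A B c d s2 s1 x y hUn hdisj hcut hA2 hB2 hcd hcne hdne
        hpart2' (hSc s2 hs2S) (hSd s2 hs2S) (hSc s1 hs1S) (hSd s1 hs1S)
        (fun h => hs12 h.symm) hx hy hchar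
        (by rw [hpairc]; exact hdeg2c) (by rw [hpairc]; exact hdeg2d)
        (by rw [hpairc]; exact hdeg1c) (by rw [hpairc]; exact hdeg1d)
        hs2A (hmemB s1 hs1A)
    · exact caseS2same G hK B A c d s1 s2 x y
        (by rw [Set.union_comm]; exact hUn) (by rw [Set.inter_comm]; exact hdisj)
        (by rw [← sepEdges_comm]; exact hcut) hcd hpart2
        (hSc s1 hs1S) (hSd s1 hs1S) (hSc s2 hs2S) (hSd s2 hs2S) hs12 hx hy hchar
        (hmemB s1 hs1A) (hmemB s2 hs2A) hnAc hnAd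
  · -- |S| = 3
    obtain ⟨s1, s2, s3, h12, h13, h23, hS⟩ := Set.ncard_eq_three.1 hSn
    have hF0 : (sepEdges G C D).ncard = 0 := by omega
    have hFempty : sepEdges G C D = ∅ :=
      (Set.ncard_eq_zero (Set.toFinite _)).1 hF0
    have hnoadj : ∀ u ∈ c, ∀ v ∈ d, ¬G.Adj u v := by
      intro u hu v hv hadj
      have := hadjF u hu v hv hadj
      rw [hFempty] at this
      exact this
    have hs1S : s1 ∈ C ∩ D := by rw [hS]; exact Or.inl rfl
    have hs2S : s2 ∈ C ∩ D := by rw [hS]; exact Or.inr (Or.inl rfl)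
    have hs3S : s3 ∈ C ∩ D := by rw [hS]; exact Or.inr (Or.inr rfl)
    have hCeq3 : C = c ∪ {s1, s2, s3} := by rw [hCeq, hS]
    have hDeq3 : D = d ∪ {s1, s2, s3} := by rw [hDeq, hS]
    have p213 : ({s2, s1, s3} : Set V) = {s1, s2, s3} := by
      ext v
      simp only [Set.mem_insert_iff, Set.mem_singleton_iff]
      tauto
    have p312 : ({s3, s1, s2} : Set V) = {s1, s2, s3} := by
      ext v
      simp only [Set.mem_insert_iff, Set.mem_singleton_iff]
      tauto
    have hdeg1 := hdeg s1 hs1S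
    have hdeg2 := hdeg s2 hs2S
    have hdeg3 := hdeg s3 hs3S
    have hdeg1c : 2 ≤ (G.neighborSet s1 ∩ (c ∪ {s1, s2, s3})).ncard := by
      rw [← hCeq3]; exact hdeg1.1
    have hdeg1d : 2 ≤ (G.neighborSet s1 ∩ (d ∪ {s1, s2, s3})).ncard := by
      rw [← hDeq3]; exact hdeg1.2
    have hdeg2c : 2 ≤ (G.neighborSet s2 ∩ (c ∪ {s2, s1, s3})).ncard := by
      rw [p213, ← hCeq3]; exact hdeg2.1
    have hdeg2d : 2 ≤ (G.neighborSet s2 ∩ (d ∪ {s2, s1, s3})).ncard := by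
      rw [p213, ← hDeq3]; exact hdeg2.2
    have hdeg3c : 2 ≤ (G.neighborSet s3 ∩ (c ∪ {s3, s1, s2})).ncard := by
      rw [p312, ← hCeq3]; exact hdeg3.1
    have hdeg3d : 2 ≤ (G.neighborSet s3 ∩ (d ∪ {s3, s1, s2})).ncard := by
      rw [p312, ← hDeq3]; exact hdeg3.2
    have hpart3 : ∀ v : V, v ∈ c ∨ v ∈ d ∨ v = s1 ∨ v = s2 ∨ v = s3 := by
      intro v
      rcases hpart v with h | h | h
      · exact Or.inl h
      · exact Or.inr (Or.inl h)
      · rw [hS] at h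
        rcases h with h | h | h
        exacts [Or.inr (Or.inr (Or.inl h)), Or.inr (Or.inr (Or.inr (Or.inl h))),
          Or.inr (Or.inr (Or.inr (Or.inr h)))]
    have hpartP213 : ∀ v : V, v ∈ c ∨ v ∈ d ∨ v = s2 ∨ v = s1 ∨ v = s3 := by
      intro v
      rcases hpart3 v with h | h | h | h | h
      exacts [Or.inl h, Or.inr (Or.inl h), Or.inr (Or.inr (Or.inr (Or.inl h))),
        Or.inr (Or.inr (Or.inl h)), Or.inr (Or.inr (Or.inr (Or.inr h)))]
    have hpartP312 : ∀ v : V, v ∈ c ∨ v ∈ d ∨ v = s3 ∨ v = s1 ∨ v = s2 := by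
      intro v
      rcases hpart3 v with h | h | h | h | h
      exacts [Or.inl h, Or.inr (Or.inl h), Or.inr (Or.inr (Or.inr (Or.inl h))),
        Or.inr (Or.inr (Or.inr (Or.inr h))), Or.inr (Or.inr (Or.inl h))]
    have hUn' : B ∪ A = Set.univ := by rw [Set.union_comm]; exact hUn
    have hdisj' : B ∩ A = ∅ := by rw [Set.inter_comm]; exact hdisj
    have hcut' : (sepEdges G B A).ncard = 3 := by rw [← sepEdges_comm]; exact hcut
    have hScd : ∀ t, t ∈ C ∩ D → ∀ v ∈ B, (∀ u ∈ C ∩ D, u ∈ A) → v ∈ c ∨ v ∈ d := by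
      intro t ht v hv hall
      rcases hpart v with h | h | h
      · exact Or.inl h
      · exact Or.inr h
      · exfalso
        have : v ∈ A ∩ B := ⟨hall v h, hv⟩
        rw [hdisj] at this; exact this
    by_cases hs1A : s1 ∈ A <;> by_cases hs2A : s2 ∈ A <;> by_cases hs3A : s3 ∈ A
    · -- AAA : S ⊆ A
      refine lockedSide G hK A B c d hUn hdisj hcut hcd ?_ hnoadj hnBc hnBd
      intro v hv
      refine hScd s1 hs1S v hv ?_
      intro u hu
      rw [hS] at hu
      rcases hu with h | h | h
      exacts [h ▸ hs1A, h ▸ hs2A, h ▸ hs3A]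
    · -- AAB : s3 alone in B
      exact caseS3 G hK B A c d s3 s1 s2 hUn' hdisj' hcut' hB2 hcne hdne hcd hpartP312
        (hSc s3 hs3S) (hSd s3 hs3S) hnoadj hdeg3c hdeg3d (hmemB s3 hs3A) hs1A hs2A
    · -- ABA : s2 alone in B
      exact caseS3 G hK B A c d s2 s1 s3 hUn' hdisj' hcut' hB2 hcne hdne hcd hpartP213
        (hSc s2 hs2S) (hSd s2 hs2S) hnoadj hdeg2c hdeg2d (hmemB s2 hs2A) hs1A hs3A
    · -- ABB : s1 alone in A
      exact caseS3 G hK A B c d s1 s2 s3 hUn hdisj hcut hA2 hcne hdne hcd hpart3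
        (hSc s1 hs1S) (hSd s1 hs1S) hnoadj hdeg1c hdeg1d hs1A (hmemB s2 hs2A)
        (hmemB s3 hs3A)
    · -- BAA : s1 alone in B
      exact caseS3 G hK B A c d s1 s2 s3 hUn' hdisj' hcut' hB2 hcne hdne hcd hpart3
        (hSc s1 hs1S) (hSd s1 hs1S) hnoadj hdeg1c hdeg1d (hmemB s1 hs1A) hs2A hs3A
    · -- BAB : s2 alone in A
      exact caseS3 G hK A B c d s2 s1 s3 hUn hdisj hcut hA2 hcne hdne hcd hpartP213
        (hSc s2 hs2S) (hSd s2 hs2S) hnoadj hdeg2c hdeg2d hs2A (hmemB s1 hs1A)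
        (hmemB s3 hs3A)
    · -- BBA : s3 alone in A
      exact caseS3 G hK A B c d s3 s1 s2 hUn hdisj hcut hA2 hcne hdne hcd hpartP312
        (hSc s3 hs3S) (hSd s3 hs3S) hnoadj hdeg3c hdeg3d hs3A (hmemB s1 hs1A)
        (hmemB s2 hs2A)
    · -- BBB : S ⊆ B
      refine lockedSide G hK B A c d hUn' hdisj' hcut' hcd ?_ hnoadj hnAc hnAd
      intro v hv
      rcases hpart v with h | h | h
      · exact Or.inl h
      · exact Or.inr h
      · exfalso
        have hvB : v ∈ B := by
          rw [hS] at h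
          rcases h with h | h | h
          exacts [h ▸ hmemB s1 hs1A, h ▸ hmemB s2 hs2A, h ▸ hmemB s3 hs3A]
        have : v ∈ A ∩ B := ⟨hv, hvB⟩
        rw [hdisj] at this; exact this

-- CHUNK12
lemma mindeg (G : SimpleGraph V) (hK : KConnected 3 G) (v : V) :
    3 ≤ (G.neighborSet v).ncard := by
  have hNS : NS G {v} = G.neighborSet v := by
    ext w
    constructor
    · rintro ⟨hw, u, hu, hadj⟩
      rw [Set.mem_singleton_iff] at hu
      exact (hu ▸ hadj : G.Adj v w)
    · intro h
      exact ⟨fun hw => G.loopless.irrefl v ((Set.mem_singleton_iff.1 hw) ▸ h), v, rfl, h⟩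
  rcases T1D G hK {v} ⟨v, rfl⟩ with h | h
  · rwa [hNS] at h
  · rw [hNS] at h
    have hcard : (Set.univ : Set V).ncard = Nat.card V := Set.ncard_univ V
    rw [← h] at hcard
    have h1 := Set.ncard_union_le ({v} : Set V) (G.neighborSet v)
    rw [Set.ncard_singleton] at h1
    have h4 : 3 < Nat.card V := hK.1
    omega

lemma sum_cB_le (G : SimpleGraph V) (A B : Set V) (hdisj : A ∩ B = ∅) [Fintype ↥A] :
    ∑ a : ↥A, (G.neighborSet ↑a ∩ B).ncard ≤ (sepEdges G A B).ncard := by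
  classical
  have hAB : ∀ v, v ∈ A → v ∈ B → False := by
    intro v h1 h2; have hv : v ∈ A ∩ B := ⟨h1, h2⟩; rw [hdisj] at hv; exact hv
  set F : ↥A → Finset (Sym2 V) :=
    fun a => ((G.neighborSet ↑a ∩ B).toFinset).image (fun b => s(↑a, b)) with hF
  have hcardF : ∀ a : ↥A, (F a).card = (G.neighborSet ↑a ∩ B).ncard := by
    intro a
    rw [hF]
    rw [Finset.card_image_of_injOn]
    · exact (Set.ncard_eq_toFinset_card' _).symm
    · intro b hb b' hb' heq
      simp only [Finset.mem_coe, Set.mem_toFinset] at hb hb'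
      have heq' : s(↑a, b) = s(↑a, b') := heq
      rw [Sym2.eq_iff] at heq'
      rcases heq' with ⟨h1, h2⟩ | ⟨h1, h2⟩
      · exact h2
      · exact (hAB b (by rw [h2]; exact a.2) hb.2).elim
  have hdisjF : ∀ a ∈ (Finset.univ : Finset ↥A), ∀ a' ∈ Finset.univ, a ≠ a' →
      Disjoint (F a) (F a') := by
    intro a _ a' _ hne
    rw [Finset.disjoint_left]
    intro e he he'
    rw [hF] at he he'
    simp only [Finset.mem_image, Set.mem_toFinset] at he he'
    obtain ⟨b, hb, rfl⟩ := he
    obtain ⟨b', hb', heq⟩ := he'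
    rw [Sym2.eq_iff] at heq
    rcases heq with ⟨h1, h2⟩ | ⟨h1, h2⟩
    · exact hne (Subtype.ext h1.symm)
    · exact hAB ↑a a.2 (h2 ▸ hb'.2)
  have hsub : (Finset.univ : Finset ↥A).biUnion F ⊆
      (Set.toFinite (sepEdges G A B)).toFinset := by
    intro e he
    rw [Finset.mem_biUnion] at he
    obtain ⟨a, -, he⟩ := he
    rw [hF] at he
    simp only [Finset.mem_image, Set.mem_toFinset] at he
    obtain ⟨b, hb, rfl⟩ := he
    rw [Set.Finite.mem_toFinset]
    exact ⟨hb.1, ↑a, ⟨a.2, fun h => hAB ↑a a.2 h⟩, b, ⟨hb.2, fun h => hAB b h hb.2⟩, rfl⟩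
  calc ∑ a : ↥A, (G.neighborSet ↑a ∩ B).ncard
      = ∑ a : ↥A, (F a).card := by
        apply Finset.sum_congr rfl
        intro a _
        exact (hcardF a).symm
    _ = ((Finset.univ : Finset ↥A).biUnion F).card := (Finset.card_biUnion hdisjF).symm
    _ ≤ (Set.toFinite (sepEdges G A B)).toFinset.card := Finset.card_le_card hsub
    _ = (sepEdges G A B).ncard := (Set.ncard_eq_toFinset_card _ _).symm

lemma hasCycleIn (G : SimpleGraph V) (hK : KConnected 3 G) (A B : Set V)
    (hUn : A ∪ B = Set.univ) (hdisj : A ∩ B = ∅) (hA2 : 2 ≤ A.ncard)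
    (hcut : (sepEdges G A B).ncard = 3) : HasCycleIn G A := by
  classical
  by_contra hnc
  have hAB : ∀ v, v ∈ A → v ∈ B → False := by
    intro v h1 h2; have hv : v ∈ A ∩ B := ⟨h1, h2⟩; rw [hdisj] at hv; exact hv
  have hmemB : ∀ v : V, v ∉ A → v ∈ B := by
    intro v hv
    rcases (by rw [hUn]; trivial : v ∈ A ∪ B) with h | h
    · exact (hv h).elim
    · exact h
  have hAne : A.Nonempty := by
    rcases Set.eq_empty_or_nonempty A with h | h
    · rw [h, Set.ncard_empty] at hA2; omega
    · exact h
  obtain ⟨a0, ha0⟩ := hAne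
  haveI : Fintype ↥A := (Set.toFinite A).fintype
  haveI : DecidableRel (G.induce A).Adj := Classical.decRel _
  -- acyclicity from absence of cycles in A
  have hacyc : (G.induce A).IsAcyclic := by
    intro v p hp
    apply hnc
    refine ⟨↑v, p.map (SimpleGraph.Embedding.induce (G := G) A).toHom, ?_, ?_⟩
    · exact (SimpleGraph.Walk.map_isCycle_iff_of_injective
        (SimpleGraph.Embedding.induce (G := G) A).injective).2 hp
    · intro x hx
      replace hx : x ∈ (p.map (SimpleGraph.Embedding.induce (G := G) A).toHom).support := hx
      rw [SimpleGraph.Walk.support_map] at hx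
      obtain ⟨a, ha, rfl⟩ := List.mem_map.1 hx
      exact a.2
  -- connectivity
  have hconn : (G.induce A).Connected := by
    rw [connected_iff_exists_forall_reachable]
    refine ⟨⟨a0, ha0⟩, fun w => ?_⟩
    by_contra hru
    set R : Set V := {v | ∃ h : v ∈ A, (G.induce A).Reachable ⟨a0, ha0⟩ ⟨v, h⟩} with hR
    have hRA : R ⊆ A := by
      intro v hv
      obtain ⟨h, -⟩ := hv
      exact h
    have ha0R : a0 ∈ R := ⟨ha0, Reachable.refl _⟩
    have hwR : ↑w ∉ R := by
      rintro ⟨h, hr⟩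
      apply hru
      have : (⟨↑w, h⟩ : ↥A) = w := Subtype.ext rfl
      rwa [this] at hr
    have hwQ : ↑w ∈ A \ R := ⟨w.2, hwR⟩
    have hnoadj : ∀ x ∈ R, ∀ y ∈ A \ R, ¬G.Adj x y := by
      rintro x ⟨hxA, hxr⟩ y hy hadj
      apply hy.2
      refine ⟨hy.1, hxr.trans ?_⟩
      exact SimpleGraph.Adj.reachable (by exact hadj)
    exact locked G hK A B R (A \ R) hUn hdisj hcut hRA Set.diff_subset
      (dd fun v h1 h2 => h2.2 h1)
      (fun v hv => by
        by_cases h : v ∈ R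
        · exact Or.inl h
        · exact Or.inr ⟨hv, h⟩)
      ⟨a0, ha0R⟩ ⟨↑w, hwQ⟩ hnoadj
  have htree : (G.induce A).IsTree := ⟨hconn, hacyc⟩
  have hcard := htree.card_edgeFinset
  have hhs := SimpleGraph.sum_degrees_eq_twice_card_edges (G.induce A)
  -- degree identity
  have hdegid : ∀ a : ↥A, (G.induce A).degree a = (G.neighborSet ↑a ∩ A).ncard := by
    intro a
    have himg : Subtype.val '' ((G.induce A).neighborSet a) = G.neighborSet ↑a ∩ A := by
      ext w
      constructor
      · rintro ⟨b, hb, rfl⟩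
        exact ⟨hb, b.2⟩
      · rintro ⟨hadj, hwA⟩
        exact ⟨⟨w, hwA⟩, by exact hadj, rfl⟩
    calc (G.induce A).degree a = ((G.induce A).neighborSet a).ncard := by
          rw [Set.ncard_eq_toFinset_card', Set.toFinset_card,
            SimpleGraph.card_neighborSet_eq_degree]
      _ = (Subtype.val '' ((G.induce A).neighborSet a)).ncard :=
          (Set.ncard_image_of_injective _ Subtype.val_injective).symm
      _ = (G.neighborSet ↑a ∩ A).ncard := by rw [himg]
  -- pointwise degree bound
  have hptwise : ∀ a : ↥A,
      3 ≤ (G.induce A).degree a + (G.neighborSet ↑a ∩ B).ncard := by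
    intro a
    have h3 := mindeg G hK ↑a
    have hsplit : (G.neighborSet ↑a).ncard ≤
        (G.neighborSet ↑a ∩ A).ncard + (G.neighborSet ↑a ∩ B).ncard := by
      have hsub : G.neighborSet ↑a ⊆ (G.neighborSet ↑a ∩ A) ∪ (G.neighborSet ↑a ∩ B) := by
        intro w hw
        by_cases h : w ∈ A
        · exact Or.inl ⟨hw, h⟩
        · exact Or.inr ⟨hw, hmemB w h⟩
      exact le_trans (Set.ncard_le_ncard hsub (Set.toFinite _)) (Set.ncard_union_le _ _)
    rw [hdegid]
    omega
  have hsum3 : 3 * Fintype.card ↥A ≤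
      ∑ a : ↥A, ((G.induce A).degree a + (G.neighborSet ↑a ∩ B).ncard) := by
    rw [← Finset.card_univ]
    calc (3:ℕ) * Finset.univ.card = ∑ _a : ↥A, 3 := by
          rw [Finset.sum_const, Finset.card_univ, Nat.mul_comm]; rfl
      _ ≤ _ := Finset.sum_le_sum (fun a _ => hptwise a)
  rw [Finset.sum_add_distrib] at hsum3
  have hcb := sum_cB_le G A B hdisj
  rw [hcut] at hcb
  have hncard : A.ncard = Fintype.card ↥A := by
    rw [Set.ncard_eq_toFinset_card', Set.toFinset_card]
  rw [hhs] at hsum3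
  omega


/-- The sides of a non-atomic 3-edge-cut of a 3-connected graph
form a totally-nested nontrivial tri-separation. -/
theorem stmt10 (G : SimpleGraph V) (h3 : KConnected 3 G) (A B : Set V)
    (hU : A ∪ B = Set.univ) (hdisj : A ∩ B = ∅)
    (hA : 2 ≤ A.ncard) (hB : 2 ≤ B.ncard)
    (hcut : (sepEdges G A B).ncard = 3) :
    TriSep G A B ∧ NontrivialSep G A B ∧ TotallyNested G A B := by
  have hABf : ∀ v, v ∈ A → v ∈ B → False := by
    intro v h1 h2; have hv : v ∈ A ∩ B := ⟨h1, h2⟩; rw [hdisj] at hv; exact hv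
  have hmemB : ∀ v : V, v ∉ A → v ∈ B := by
    intro v hv
    rcases (by rw [hU]; trivial : v ∈ A ∪ B) with h | h
    · exact (hv h).elim
    · exact h
  have hmemA : ∀ v : V, v ∉ B → v ∈ A := by
    intro v hv
    rcases (by rw [hU]; trivial : v ∈ A ∪ B) with h | h
    · exact h
    · exact (hv h).elim
  have hAne : A.Nonempty := by
    rcases Set.eq_empty_or_nonempty A with h | h
    · rw [h, Set.ncard_empty] at hA; omega
    · exact h
  have hBne : B.Nonempty := by
    rcases Set.eq_empty_or_nonempty B with h | h
    · rw [h, Set.ncard_empty] at hB; omega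
    · exact h
  have hUn' : B ∪ A = Set.univ := by rw [Set.union_comm]; exact hU
  have hdisj' : B ∩ A = ∅ := by rw [Set.inter_comm]; exact hdisj
  have hcut' : (sepEdges G B A).ncard = 3 := by rw [← sepEdges_comm]; exact hcut
  refine ⟨⟨⟨⟨hU, ?_, ?_⟩, ?_⟩, ?_⟩, ⟨?_, ?_⟩, ?_⟩
  · obtain ⟨a, ha⟩ := hAne
    exact ⟨a, ha, fun h => hABf a ha h⟩
  · obtain ⟨b, hb⟩ := hBne
    exact ⟨b, hb, fun h => hABf b h hb⟩
  · rw [sepOrder_decomp, hdisj, Set.ncard_empty, hcut]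
  · intro v hv
    rw [hdisj] at hv
    exact hv.elim
  · exact hasCycleIn G h3 A B hU hdisj hA hcut
  · exact hasCycleIn G h3 B A hUn' hdisj' hB hcut'
  · intro C D hCD
    have key : A ⊆ C \ D ∨ A ⊆ D \ C ∨ B ⊆ C \ D ∨ B ⊆ D \ C := by
      by_contra h
      push_neg at h
      exact master G h3 A B C D hU hdisj hA hB hcut hCD h.1 h.2.1 h.2.2.1 h.2.2.2
    rcases key with h | h | h | h
    · exact Or.inl ⟨fun a ha => (h ha).1,
        fun v hv => hmemB v (fun hvA => (h hvA).2 hv)⟩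
    · exact Or.inr (Or.inl ⟨fun a ha => (h ha).1,
        fun v hv => hmemB v (fun hvA => (h hvA).2 hv)⟩)
    · exact Or.inr (Or.inr (Or.inl ⟨fun b hb => (h hb).1,
        fun v hv => hmemA v (fun hvB => (h hvB).2 hv)⟩))
    · exact Or.inr (Or.inr (Or.inr ⟨fun b hb => (h hb).1,
        fun v hv => hmemA v (fun hvB => (h hvB).2 hv)⟩))

end Paper
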